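/- arXiv:1307.0135 — 6 statements merged into one kernel-verified Lean document; each statement's English description precedes it below -/
import Mathlib

section
/- Let m ≥ 1 and let I ⊆ ℤ/mℤ be an interval (the injective reduction mod m of an interval of consecutive integers). For any integer a with 0 ≤ a < m, the symmetric difference of I and its translate a+I (viewing a as an element of ℤ/mℤ with representative of absolute value ≤ m/2) satisfies |I △ (a+I)| ≤ 2·min(a, m−a). -/
open Finset
open scoped symmDiff

/-- An interval in `ZMod m`: the injective reduction mod `m` of an interval of
consecutive integers. -/
def IsInterval {m : ℕ} (I : Finset (ZMod m)) : Prop :=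
  ∃ a b : ℤ, Set.InjOn (Int.cast : ℤ → ZMod m) (Finset.Icc a b : Set ℤ) ∧
    I = (Finset.Icc a b).image (Int.cast : ℤ → ZMod m)

theorem symmDiff_translate_interval (m : ℕ) (hm : 1 ≤ m) (I : Finset (ZMod m))
    (hI : IsInterval I) (a : ℕ) (ha : a < m) :
    (I ∆ (I.image (fun x => (a : ZMod m) + x))).card ≤ 2 * min a (m - a) := by
  obtain ⟨c, d, hinj, hIeq⟩ := hI
  obtain ⟨s, hs1, hs2⟩ : ∃ s : ℤ, ((s : ℤ) : ZMod m) = (a : ZMod m) ∧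
      s.natAbs = min a (m - a) := by
    rcases le_or_gt a (m - a) with h | h
    · exact ⟨(a : ℤ), by push_cast; ring, by omega⟩
    · refine ⟨(a : ℤ) - (m : ℤ), ?_, by omega⟩
      push_cast
      simp [ZMod.natCast_self]
  rcases le_or_gt c d with hcd | hcd
  swap
  · rw [Finset.Icc_eq_empty (by omega)] at hIeq
    simp [hIeq]
  set T := I.image (fun x => (a : ZMod m) + x) with hTdef
  have hT : T = (Finset.Icc (c + s) (d + s)).image (Int.cast : ℤ → ZMod m) := by
    rw [hTdef, hIeq, Finset.image_image, ← Finset.image_add_right_Icc, Finset.image_image]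
    apply Finset.image_congr
    intro y hy
    simp only [Function.comp]
    push_cast
    rw [hs1]; ring
  set lo := max c (c + s) with hlo
  set hi := min d (d + s) with hhi
  set S := (Finset.Icc lo hi).image (Int.cast : ℤ → ZMod m) with hSdef
  have hsubIcc : Finset.Icc lo hi ⊆ Finset.Icc c d :=
    Finset.Icc_subset_Icc (le_max_left _ _) (min_le_left _ _)
  have hSI : S ⊆ I := by rw [hSdef, hIeq]; exact Finset.image_subset_image hsubIcc
  have hST : S ⊆ T := by
    rw [hSdef, hT]
    exact Finset.image_subset_image (Finset.Icc_subset_Icc (le_max_right _ _) (min_le_right _ _))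
  have hcardI : I.card = (d + 1 - c).toNat := by
    rw [hIeq, Finset.card_image_of_injOn hinj, Int.card_Icc]
  have hcardT : T.card = I.card := by
    rw [hTdef]
    exact Finset.card_image_of_injective _ (add_right_injective _)
  have hcardS : S.card = (hi + 1 - lo).toNat := by
    rw [hSdef, Finset.card_image_of_injOn (hinj.mono (by exact_mod_cast hsubIcc)), Int.card_Icc]
  have h1 : (I ∆ T).card ≤ (I \ T).card + (T \ I).card := by
    rw [symmDiff_def]
    exact Finset.card_union_le _ _
  have h2 : (I \ T).card ≤ I.card - S.card := by
    calc (I \ T).card ≤ (I \ S).card :=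
          Finset.card_le_card (Finset.sdiff_subset_sdiff le_rfl hST)
      _ = I.card - S.card := Finset.card_sdiff_of_subset hSI
  have h3 : (T \ I).card ≤ T.card - S.card := by
    calc (T \ I).card ≤ (T \ S).card :=
          Finset.card_le_card (Finset.sdiff_subset_sdiff le_rfl hSI)
      _ = T.card - S.card := Finset.card_sdiff_of_subset hST
  rcases le_or_gt 0 s with hsp | hsn
  · have e1 : lo = c + s := max_eq_right (by omega)
    have e2 : hi = d := min_eq_left (by omega)
    rw [e1, e2] at hcardS
    omega
  · have e1 : lo = c := max_eq_left (by omega)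
    have e2 : hi = d + s := min_eq_right (by omega)
    rw [e1, e2] at hcardS
    omega
end

section
/- Let m ≥ 1, let φ : ℤ/mℤ → ℂ, let I ⊆ ℤ/mℤ be an interval, and let D ⊆ ℤ/mℤ be any subset. Then |∑_{n∈I} φ(n)|³ ≤ 8·‖φ‖_∞ · ( |I|·|D|·‖φ‖₂² + |I|²·max_{a∉D} |C(φ,a)| + (1/4)·‖φ‖_∞²·|I|² ), where C(φ,a) = ∑_{x} φ(x)·conj(φ(x+a)). Equivalently, |∑_{n∈I} φ(n)| ≤ 2‖φ‖_∞^{1/3}·( |D|^{1/3}|I|^{1/3}‖φ‖₂^{2/3} + |I|^{2/3}·max_{a∉D}|C(φ,a)|^{1/3} + (2/3)|I|^{2/3}‖φ‖_∞^{2/3} ). -/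
open Finset

/-- The additive autocorrelation of `φ` at shift `a`. -/
noncomputable def corr {m : ℕ} [NeZero m] (φ : ZMod m → ℂ) (a : ZMod m) : ℂ :=
  ∑ x : ZMod m, φ x * (starRingEnd ℂ) (φ (x + a))



lemma abs_corr_le {m : ℕ} [NeZero m] (φ : ZMod m → ℂ) (a : ZMod m) :
    ‖corr φ a‖ ≤ ∑ x : ZMod m, ‖φ x‖ ^ 2 := by
  set E := ∑ x : ZMod m, ‖φ x‖ ^ 2 with hE
  have hE0 : 0 ≤ E := Finset.sum_nonneg fun x _ => sq_nonneg _
  have hshift : ∑ x : ZMod m, ‖φ (x + a)‖ ^ 2 = E :=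
    Fintype.sum_equiv (Equiv.addRight a) _ _ (fun x => rfl)
  have h1 : ‖corr φ a‖
      ≤ ∑ x : ZMod m, ‖φ x‖ * ‖φ (x + a)‖ := by
    refine (norm_sum_le _ _).trans_eq ?_
    refine Finset.sum_congr rfl fun x _ => ?_
    rw [norm_mul, Complex.norm_conj]
  have h2 := Finset.sum_mul_sq_le_sq_mul_sq Finset.univ
      (fun x : ZMod m => ‖φ x‖) (fun x => ‖φ (x + a)‖)
  rw [hshift] at h2
  have h3 : 0 ≤ ∑ x : ZMod m, ‖φ x‖ * ‖φ (x + a)‖ :=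
    Finset.sum_nonneg fun x _ => mul_nonneg (norm_nonneg _) (norm_nonneg _)
  nlinarith [h1, h2, h3, hE0]



lemma energy_eq {m : ℕ} [NeZero m] (φ : ZMod m → ℂ) (L : ℕ) :
    ∑ u : ZMod m, ‖∑ t ∈ range L, φ (u + (t : ℕ))‖ ^ 2
      = (∑ t ∈ range L, ∑ t' ∈ range L, corr φ ((t' : ZMod m) - (t : ZMod m))).re := by
  have key : ∀ t t' : ℕ, (∑ u : ZMod m, φ (u + (t:ℕ)) * (starRingEnd ℂ) (φ (u + (t':ℕ))))
      = corr φ ((t' : ZMod m) - t) := by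
    intro t t'
    refine Fintype.sum_equiv (Equiv.addRight (t : ZMod m)) _ _ fun u => ?_
    show φ (u + (t:ℕ)) * _ = φ (u + (t:ZMod m)) * (starRingEnd ℂ) (φ (u + t + ((t' : ZMod m) - t)))
    have h : u + (t : ZMod m) + ((t' : ZMod m) - t) = u + t' := by ring
    rw [h]
  calc ∑ u : ZMod m, ‖∑ t ∈ range L, φ (u + (t:ℕ))‖ ^ 2
      = ∑ u : ZMod m, ((∑ t ∈ range L, φ (u + (t:ℕ)))
          * (starRingEnd ℂ) (∑ t' ∈ range L, φ (u + (t':ℕ)))).re := by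
        refine Finset.sum_congr rfl fun u _ => ?_
        rw [Complex.mul_conj, ← Complex.sq_norm]
        rw [Complex.ofReal_re]
    _ = (∑ u : ZMod m, (∑ t ∈ range L, φ (u + (t:ℕ)))
          * (starRingEnd ℂ) (∑ t' ∈ range L, φ (u + (t':ℕ)))).re := by
        rw [Complex.re_sum]
    _ = (∑ t ∈ range L, ∑ t' ∈ range L, corr φ ((t' : ZMod m) - t)).re := by
        congr 1
        calc ∑ u : ZMod m, (∑ t ∈ range L, φ (u + (t:ℕ)))
              * (starRingEnd ℂ) (∑ t' ∈ range L, φ (u + (t':ℕ)))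
            = ∑ u : ZMod m, ∑ t ∈ range L, ∑ t' ∈ range L,
                φ (u + (t:ℕ)) * (starRingEnd ℂ) (φ (u + (t':ℕ))) := by
              refine Finset.sum_congr rfl fun u _ => ?_
              rw [map_sum, Finset.sum_mul_sum]
          _ = ∑ t ∈ range L, ∑ t' ∈ range L, ∑ u : ZMod m,
                φ (u + (t:ℕ)) * (starRingEnd ℂ) (φ (u + (t':ℕ))) := by
              rw [Finset.sum_comm]
              exact Finset.sum_congr rfl fun t _ => Finset.sum_comm
          _ = ∑ t ∈ range L, ∑ t' ∈ range L, corr φ ((t' : ZMod m) - t) := by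
              exact Finset.sum_congr rfl fun t _ => Finset.sum_congr rfl fun t' _ => key t t'



lemma corr_sum_bound {m : ℕ} [NeZero m] (φ : ZMod m → ℂ) (L : ℕ) (hLm : L ≤ m)
    (D : Finset (ZMod m)) (M : ℝ) (hM0 : 0 ≤ M) (hM : ∀ a : ZMod m, a ∉ D → ‖corr φ a‖ ≤ M)
    (hcorr : ∀ a : ZMod m, ‖corr φ a‖ ≤ ∑ x : ZMod m, ‖φ x‖ ^ 2) :
    ∑ t ∈ range L, ∑ t' ∈ range L, ‖corr φ ((t' : ZMod m) - (t : ZMod m))‖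
      ≤ (L : ℝ) * D.card * (∑ x : ZMod m, ‖φ x‖ ^ 2) + (L : ℝ) ^ 2 * M := by
  set E := ∑ x : ZMod m, ‖φ x‖ ^ 2 with hEdef
  have hE0 : 0 ≤ E := Finset.sum_nonneg fun x _ => sq_nonneg _
  set P : ℕ × ℕ → Prop := fun p => ((p.2 : ZMod m) - (p.1 : ZMod m)) ∈ D with hP
  have hsum : ∑ t ∈ range L, ∑ t' ∈ range L, ‖corr φ ((t' : ZMod m) - t)‖
      = ∑ p ∈ range L ×ˢ range L, ‖corr φ ((p.2 : ZMod m) - (p.1 : ZMod m))‖ := by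
    rw [Finset.sum_product]
  rw [hsum, ← Finset.sum_filter_add_sum_filter_not (range L ×ˢ range L) P]
  have hcard1 : ((range L ×ˢ range L).filter P).card ≤ L * D.card := by
    have h := Finset.card_le_card_of_injOn
      (fun p : ℕ × ℕ => (p.1, (p.2 : ZMod m) - (p.1 : ZMod m)))
      (s := (range L ×ˢ range L).filter P) (t := range L ×ˢ D) ?_ ?_
    · simpa [Finset.card_product] using h
    · intro p hp
      rw [Finset.mem_coe, Finset.mem_filter] at hp
      rw [Finset.mem_coe, Finset.mem_product]
      exact ⟨(Finset.mem_product.1 hp.1).1, hp.2⟩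
    · intro p hp q hq hpq
      simp only [Finset.coe_filter, Set.mem_setOf_eq, Finset.mem_product,
        Finset.mem_range] at hp hq
      have hpq' : (p.1, (p.2 : ZMod m) - (p.1 : ZMod m)) = (q.1, (q.2 : ZMod m) - (q.1 : ZMod m)) := hpq
      have h1 : p.1 = q.1 := (Prod.ext_iff.1 hpq').1
      have h2 : (p.2 : ZMod m) - (p.1 : ZMod m) = (q.2 : ZMod m) - (q.1 : ZMod m) :=
        (Prod.ext_iff.1 hpq').2
      rw [h1] at h2
      have h3 : (p.2 : ZMod m) = (q.2 : ZMod m) := by rwa [sub_left_inj] at h2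
      have h4 : p.2 = q.2 := by
        have hv := congrArg ZMod.val h3
        rwa [ZMod.val_cast_of_lt (lt_of_lt_of_le hp.1.2 hLm),
          ZMod.val_cast_of_lt (lt_of_lt_of_le hq.1.2 hLm)] at hv
      exact Prod.ext h1 h4
  have hb1 : ∑ p ∈ (range L ×ˢ range L).filter P,
      ‖corr φ ((p.2 : ZMod m) - (p.1 : ZMod m))‖ ≤ (L : ℝ) * D.card * E := by
    calc ∑ p ∈ (range L ×ˢ range L).filter P,
        ‖corr φ ((p.2 : ZMod m) - (p.1 : ZMod m))‖
        ≤ ∑ _p ∈ (range L ×ˢ range L).filter P, E :=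
          Finset.sum_le_sum fun p _ => hcorr _
      _ = ((range L ×ˢ range L).filter P).card * E := by rw [Finset.sum_const, nsmul_eq_mul]
      _ ≤ (L * D.card : ℕ) * E := by
          exact mul_le_mul_of_nonneg_right (by exact_mod_cast hcard1) hE0
      _ = (L : ℝ) * D.card * E := by push_cast; ring
  have hb2 : ∑ p ∈ (range L ×ˢ range L).filter (fun p => ¬ P p),
      ‖corr φ ((p.2 : ZMod m) - (p.1 : ZMod m))‖ ≤ (L : ℝ) ^ 2 * M := by
    calc ∑ p ∈ (range L ×ˢ range L).filter (fun p => ¬ P p),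
        ‖corr φ ((p.2 : ZMod m) - (p.1 : ZMod m))‖
        ≤ ∑ _p ∈ (range L ×ˢ range L).filter (fun p => ¬ P p), M := by
          refine Finset.sum_le_sum fun p hp => ?_
          exact hM _ (Finset.mem_filter.1 hp).2
      _ = ((range L ×ˢ range L).filter (fun p => ¬ P p)).card * M := by
          rw [Finset.sum_const, nsmul_eq_mul]
      _ ≤ ((range L ×ˢ range L).card : ℝ) * M := by
          refine mul_le_mul_of_nonneg_right ?_ hM0
          exact_mod_cast Finset.card_filter_le _ _
      _ = (L : ℝ) ^ 2 * M := by rw [Finset.card_product, Finset.card_range]; push_cast; ring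
  linarith



lemma step_eq {m : ℕ} [NeZero m] (φ : ZMod m → ℂ) (L : ℕ) (u : ZMod m) :
    ∑ t ∈ range L, φ (u + 1 + (t : ℕ)) =
      ∑ t ∈ range L, φ (u + (t : ℕ)) + φ (u + (L : ℕ)) - φ u := by
  have h1 : ∀ t : ℕ, u + 1 + ((t : ℕ) : ZMod m) = u + (((t + 1 : ℕ) : ℕ) : ZMod m) := by
    intro t; push_cast; ring
  calc ∑ t ∈ range L, φ (u + 1 + (t : ℕ))
      = ∑ t ∈ range L, φ (u + ((t + 1 : ℕ) : ZMod m)) :=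
        Finset.sum_congr rfl fun t _ => by rw [h1]
    _ = ∑ t ∈ range (L + 1), φ (u + (t : ℕ)) - φ (u + ((0 : ℕ) : ZMod m)) := by
        rw [Finset.sum_range_succ']; ring
    _ = ∑ t ∈ range L, φ (u + (t : ℕ)) + φ (u + (L : ℕ)) - φ u := by
        rw [Finset.sum_range_succ]; norm_num

lemma slide {m : ℕ} [NeZero m] (φ : ZMod m → ℂ) (L : ℕ) (ν : ℝ)
    (hν : ∀ x, ‖φ x‖ ≤ ν) (u : ZMod m) (j : ℕ) :
    ‖∑ t ∈ range L, φ (u + (t : ℕ))‖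
      ≤ ‖∑ t ∈ range L, φ (u + (j : ℕ) + (t : ℕ))‖ + 2 * ν * j := by
  induction j with
  | zero => simp
  | succ j ih =>
    have hstep := step_eq φ L (u + (j : ℕ))
    have hre : (∑ t ∈ range L, φ (u + (j : ℕ) + (t : ℕ)))
        = (∑ t ∈ range L, φ (u + (j : ℕ) + 1 + (t : ℕ)))
          - φ (u + (j : ℕ) + (L : ℕ)) + φ (u + (j : ℕ)) := by
      rw [hstep]; ring
    have habs : ‖∑ t ∈ range L, φ (u + (j : ℕ) + (t : ℕ))‖
        ≤ ‖∑ t ∈ range L, φ (u + (j : ℕ) + 1 + (t : ℕ))‖ + 2 * ν := by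
      rw [hre]
      refine le_trans (norm_add_le _ _) ?_
      have h2 : ‖(∑ t ∈ range L, φ (u + (j : ℕ) + 1 + (t : ℕ)))
          - φ (u + (j : ℕ) + (L : ℕ))‖
          ≤ ‖∑ t ∈ range L, φ (u + (j : ℕ) + 1 + (t : ℕ))‖
            + ‖φ (u + (j : ℕ) + (L : ℕ))‖ := by
        rw [sub_eq_add_neg]
        exact (norm_add_le _ _).trans_eq (by rw [norm_neg])
      have h3 := hν (u + (j : ℕ) + (L : ℕ))
      have h4 := hν (u + (j : ℕ))
      linarith
    have hcast : u + ((j + 1 : ℕ) : ZMod m) = u + (j : ℕ) + 1 := by push_cast; ring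
    have : ∑ t ∈ range L, φ (u + ((j + 1 : ℕ) : ZMod m) + (t : ℕ))
        = ∑ t ∈ range L, φ (u + (j : ℕ) + 1 + (t : ℕ)) :=
      Finset.sum_congr rfl fun t _ => by rw [hcast]
    rw [this]
    push_cast
    push_cast at ih
    linarith

lemma interval_sum {m : ℕ} [NeZero m] (φ : ZMod m → ℂ) {I : Finset (ZMod m)}
    (hI : IsInterval I) :
    ∃ a₀ : ZMod m, ∑ n ∈ I, φ n = ∑ t ∈ range I.card, φ (a₀ + (t : ℕ)) := by
  obtain ⟨a, b, hinj, hIeq⟩ := hI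
  by_cases hab : a ≤ b
  · refine ⟨(a : ZMod m), ?_⟩
    have hcard : I.card = (Finset.Icc a b).card := by
      rw [hIeq]; exact Finset.card_image_of_injOn hinj
    rw [hcard, Int.card_Icc, hIeq, Finset.sum_image (fun x hx y hy h => hinj hx hy h)]
    refine Finset.sum_nbij' (i := fun x : ℤ => (x - a).toNat)
      (j := fun t : ℕ => a + (t : ℤ)) ?_ ?_ ?_ ?_ ?_
    · intro x hx
      rw [Finset.mem_Icc] at hx
      rw [Finset.mem_range]
      omega
    · intro t ht
      rw [Finset.mem_range] at ht
      rw [Finset.mem_Icc]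
      omega
    · intro x hx
      rw [Finset.mem_Icc] at hx
      omega
    · intro t ht
      omega
    · intro x hx
      rw [Finset.mem_Icc] at hx
      congr 1
      have : ((a : ℤ) : ZMod m) + ((x - a).toNat : ZMod m) = ((a + (x-a).toNat : ℤ) : ZMod m) := by
        push_cast; ring
      rw [this]
      congr 1
      omega
  · refine ⟨0, ?_⟩
    have : Finset.Icc a b = ∅ := Finset.Icc_eq_empty (by omega)
    rw [hIeq, this]
    simp


set_option maxHeartbeats 2000000 in
/-- Sliding-sum bound (Theorem 2 of the paper): for any interval `I` and any set `D`,
with `ν` the sup norm of `φ` and `M` a bound for `|corr φ a|` off `D`. -/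
theorem sliding_sum_bound (m : ℕ) [NeZero m] (φ : ZMod m → ℂ)
    (I : Finset (ZMod m)) (hI : IsInterval I) (D : Finset (ZMod m))
    (ν : ℝ) (hν : ∀ x, ‖φ x‖ ≤ ν)
    (M : ℝ) (hM0 : 0 ≤ M) (hM : ∀ a : ZMod m, a ∉ D → ‖corr φ a‖ ≤ M) :
    (‖∑ n ∈ I, φ n‖) ^ 3 ≤
      8 * ν * ((I.card : ℝ) * D.card * (∑ x : ZMod m, (‖φ x‖) ^ 2)
        + (I.card : ℝ) ^ 2 * M + (1 / 4) * ν ^ 2 * (I.card : ℝ) ^ 2) := by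
  set L : ℕ := I.card with hL
  set E : ℝ := ∑ x : ZMod m, ‖φ x‖ ^ 2 with hEdef
  set s : ℝ := ‖∑ n ∈ I, φ n‖ with hsdef
  have hE0 : 0 ≤ E := Finset.sum_nonneg fun x _ => sq_nonneg _
  have hν0 : 0 ≤ ν := le_trans (norm_nonneg _) (hν 0)
  have hs0 : 0 ≤ s := norm_nonneg _
  have hLm : L ≤ m := by
    have h := Finset.card_le_univ I
    rwa [ZMod.card] at h
  have hDE0 : 0 ≤ (L : ℝ) * D.card * E :=
    mul_nonneg (mul_nonneg (Nat.cast_nonneg _) (Nat.cast_nonneg _)) hE0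
  have hM20 : 0 ≤ (L : ℝ) ^ 2 * M := mul_nonneg (sq_nonneg _) hM0
  -- trivial bound s ≤ ν * L
  have hsL : s ≤ ν * L := by
    rw [hsdef]
    refine le_trans (norm_sum_le _ _) ?_
    calc ∑ n ∈ I, ‖φ n‖ ≤ ∑ _n ∈ I, ν := Finset.sum_le_sum fun n _ => hν n
      _ = ν * L := by rw [Finset.sum_const, nsmul_eq_mul, hL]; ring
  by_cases hL2 : 2 ≤ (L : ℝ)
  · by_cases hs2ν : s ≤ 2 * ν
    · -- small s case
      have key : s ^ 3 ≤ (2 * ν) ^ 3 := pow_le_pow_left₀ hs0 hs2ν 3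
      have hL4 : (4:ℝ) ≤ (L:ℝ) ^ 2 := by nlinarith
      have key2 : 8 * ν ^ 3 ≤ 2 * ν ^ 3 * (L:ℝ) ^ 2 := by
        nlinarith [pow_nonneg hν0 3]
      nlinarith [key, key2, mul_nonneg hν0 hDE0, mul_nonneg hν0 hM20]
    · push_neg at hs2ν
      have hνpos : 0 < ν := by
        rcases hν0.lt_or_eq with h | h
        · exact h
        · exfalso; nlinarith
      have hspos : 0 < s := lt_trans (by positivity) hs2ν
      -- energy bound
      obtain ⟨a₀, hFa⟩ := interval_sum φ hI
      have hB : ∑ u : ZMod m, ‖∑ t ∈ range L, φ (u + (t : ℕ))‖ ^ 2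
          ≤ (L : ℝ) * D.card * E + (L : ℝ) ^ 2 * M := by
        rw [energy_eq]
        refine le_trans (Complex.re_le_norm _) ?_
        refine le_trans (norm_sum_le _ _) ?_
        refine le_trans (Finset.sum_le_sum fun t _ => norm_sum_le _ _) ?_
        exact corr_sum_bound φ L hLm D M hM0 hM (abs_corr_le φ)
      -- pointwise lower bound along the orbit
      have hj : ∀ j : ℕ, s ^ 2 - 4 * ν * s * (j : ℝ)
          ≤ ‖∑ t ∈ range L, φ (a₀ + (j : ℕ) + (t : ℕ))‖ ^ 2 := by
        intro j
        have h1 := slide φ L ν hν a₀ j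
        rw [← hFa, ← hsdef] at h1
        set A : ℝ := ‖∑ t ∈ range L, φ (a₀ + (j : ℕ) + (t : ℕ))‖ with hAdef
        have h2 : (0:ℝ) ≤ A := norm_nonneg _
        have hj0 : (0:ℝ) ≤ (j : ℝ) := Nat.cast_nonneg _
        rcases le_or_gt 0 (s - 2 * ν * (j:ℝ)) with h | h
        · nlinarith [mul_nonneg (by linarith : (0:ℝ) ≤ A - (s - 2 * ν * (j:ℝ)))
            (by linarith : (0:ℝ) ≤ A + (s - 2 * ν * (j:ℝ))), sq_nonneg (ν * (j:ℝ))]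
        · nlinarith [mul_nonneg (mul_nonneg hν0 hj0) hs0, sq_nonneg A]
      -- choose K
      set θ : ℝ := s / (4 * ν) with hθdef
      have hθ0 : 0 ≤ θ := by positivity
      have hs4θ : s = 4 * ν * θ := by rw [hθdef]; field_simp
      set K : ℕ := ⌊θ + 1/2⌋₊ with hK
      have hKub : (K : ℝ) ≤ θ + 1/2 := Nat.floor_le (by linarith)
      have hKlb : θ + 1/2 < (K : ℝ) + 1 := Nat.lt_floor_add_one _
      have hθL : θ ≤ (L : ℝ) / 4 := by
        rw [hθdef, div_le_div_iff₀ (by positivity) (by norm_num)]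
        nlinarith
      have hKL : (K : ℝ) ≤ (L : ℝ) := by linarith
      have hKm : K ≤ m := le_trans (by exact_mod_cast hKL) hLm
      -- sum over orbit ≤ total energy
      have hinj : Set.InjOn (fun j : ℕ => a₀ + (j : ZMod m)) (range K) := by
        intro j hj1 j' hj2 h
        simp only [Finset.coe_range, Set.mem_Iio] at hj1 hj2
        have h3 : (j : ZMod m) = (j' : ZMod m) := by
          dsimp only at h
          exact add_left_cancel h
        have := congrArg ZMod.val h3
        rwa [ZMod.val_cast_of_lt (lt_of_lt_of_le hj1 hKm),
          ZMod.val_cast_of_lt (lt_of_lt_of_le hj2 hKm)] at this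
      have horbit : ∑ j ∈ range K, ‖∑ t ∈ range L, φ (a₀ + (j : ℕ) + (t : ℕ))‖ ^ 2
          ≤ ∑ u : ZMod m, ‖∑ t ∈ range L, φ (u + (t : ℕ))‖ ^ 2 := by
        have h1 : ∑ j ∈ range K, ‖∑ t ∈ range L, φ (a₀ + (j : ℕ) + (t : ℕ))‖ ^ 2
            = ∑ u ∈ (range K).image (fun j : ℕ => a₀ + (j : ZMod m)),
                ‖∑ t ∈ range L, φ (u + (t : ℕ))‖ ^ 2 :=
          (Finset.sum_image (f := fun u : ZMod m =>
              ‖∑ t ∈ range L, φ (u + (t : ℕ))‖ ^ 2)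
            (g := fun j : ℕ => a₀ + (j : ZMod m))
            (fun x hx y hy h =>
            hinj (Finset.mem_coe.mpr hx) (Finset.mem_coe.mpr hy) h)).symm
        rw [h1]
        exact Finset.sum_le_sum_of_subset_of_nonneg (Finset.subset_univ _)
          (fun u _ _ => sq_nonneg _)
      -- Gauss bound
      have hgauss : ∑ j ∈ range K, (j : ℝ) ≤ (K : ℝ) ^ 2 / 2 := by
        have h1 : (∑ j ∈ range K, j) * 2 = K * (K - 1) := Finset.sum_range_id_mul_two K
        have h2 : ((∑ j ∈ range K, j : ℕ) : ℝ) = ∑ j ∈ range K, (j : ℝ) := by push_cast; rfl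
        have h3 : (∑ j ∈ range K, j) * 2 ≤ K * K := by
          rw [h1]; exact Nat.mul_le_mul_left K (Nat.sub_le K 1)
        have h4 : (∑ j ∈ range K, (j:ℝ)) * 2 ≤ (K:ℝ) * K := by
          rw [← h2]; exact_mod_cast h3
        nlinarith
      have hmain : (K : ℝ) * s ^ 2 - 2 * ν * s * (K : ℝ) ^ 2
          ≤ (L : ℝ) * D.card * E + (L : ℝ) ^ 2 * M := by
        have h5 : ∑ j ∈ range K, (s ^ 2 - 4 * ν * s * (j : ℝ))
            ≤ ∑ j ∈ range K, ‖∑ t ∈ range L, φ (a₀ + (j : ℕ) + (t : ℕ))‖ ^ 2 :=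
          Finset.sum_le_sum fun j _ => hj j
        have h6 : ∑ j ∈ range K, (s ^ 2 - 4 * ν * s * (j : ℝ))
            = (K : ℝ) * s ^ 2 - 4 * ν * s * ∑ j ∈ range K, (j : ℝ) := by
          rw [Finset.sum_sub_distrib, Finset.sum_const, Finset.card_range, ← Finset.mul_sum,
            nsmul_eq_mul]
        have h7 : 4 * ν * s * ∑ j ∈ range K, (j : ℝ) ≤ 2 * ν * s * (K : ℝ) ^ 2 := by
          have := mul_le_mul_of_nonneg_left hgauss
            (by positivity : (0:ℝ) ≤ 4 * ν * s)
          nlinarith [this]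
        nlinarith [h5, horbit, hB]
      -- final arithmetic
      have h14 : (θ - (K : ℝ)) ^ 2 ≤ 1 / 4 := by nlinarith
      have hA : s ^ 3 = 8 * ν * ((K : ℝ) * s ^ 2 - 2 * ν * s * (K : ℝ) ^ 2)
          + 64 * ν ^ 3 * θ * (θ - (K : ℝ)) ^ 2 := by rw [hs4θ]; ring
      have hB2 : 64 * ν ^ 3 * θ * (θ - (K : ℝ)) ^ 2 ≤ 16 * ν ^ 3 * θ := by
        nlinarith [mul_nonneg (pow_nonneg hν0 3) hθ0]
      have hC : 16 * ν ^ 3 * θ = 4 * ν ^ 2 * s := by rw [hs4θ]; ring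
      have hL0' : (0:ℝ) ≤ (L : ℝ) := Nat.cast_nonneg _
      have hD : 4 * ν ^ 2 * s ≤ 2 * ν ^ 3 * (L : ℝ) ^ 2 := by
        nlinarith [mul_le_mul_of_nonneg_left hsL (by positivity : (0:ℝ) ≤ 4 * ν ^ 2),
          mul_nonneg (mul_nonneg (pow_nonneg hν0 3) hL0') (by linarith : (0:ℝ) ≤ (L:ℝ) - 2)]
      have hE2 : 8 * ν * ((K : ℝ) * s ^ 2 - 2 * ν * s * (K : ℝ) ^ 2)
          ≤ 8 * ν * ((L : ℝ) * D.card * E + (L : ℝ) ^ 2 * M) :=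
        mul_le_mul_of_nonneg_left hmain (by linarith)
      nlinarith [hA, hB2, hC, hD, hE2]
  · -- L ≤ 1
    push_neg at hL2
    have hL1 : (L : ℝ) ≤ 1 := by
      have h1 : L < 2 := by exact_mod_cast hL2
      have h2 : L ≤ 1 := by omega
      exact_mod_cast h2
    have hL0 : (0:ℝ) ≤ L := Nat.cast_nonneg _
    have hvL0 : 0 ≤ ν * (L:ℝ) := mul_nonneg hν0 hL0
    have k1 : s ^ 3 ≤ (ν * (L:ℝ)) ^ 3 := pow_le_pow_left₀ hs0 hsL 3
    have k2 : (ν * (L:ℝ)) ^ 3 ≤ 2 * ν ^ 3 * (L:ℝ) ^ 2 := by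
      nlinarith [mul_nonneg (mul_nonneg (pow_nonneg hν0 3) (sq_nonneg (L:ℝ)))
        (by linarith : (0:ℝ) ≤ 2 - (L:ℝ))]
    nlinarith [k1, k2, mul_nonneg hν0 hDE0, mul_nonneg hν0 hM20]
end

section
/- Let m ≥ 1, c ≥ 1 real, and let φ : ℤ/mℤ → ℂ satisfy: ‖φ‖_∞ ≤ c, and there is a set D ⊆ ℤ/mℤ with |D| ≤ c such that |C(φ,a)| ≤ c·√m for all a ∉ D. Then for every interval I ⊆ ℤ/mℤ, one has |∑_{n∈I} φ(n)| ≤ 2·c^{4/3}·( m^{1/3}|I|^{1/3} + 2·m^{1/6}|I|^{2/3} ). -/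
open Finset

set_option maxHeartbeats 1000000


lemma rpow_cube' (x : ℝ) (hx : 0 ≤ x) : (x ^ ((1:ℝ)/3))^3 = x := by
  rw [← Real.rpow_natCast (x ^ ((1:ℝ)/3)) 3, ← Real.rpow_mul hx]; norm_num

lemma caseA_bound (c M L : ℝ) (hc : 1 ≤ c) (hM : 1 ≤ M) (hL : 1 ≤ L)
    (hA : L^2 ≤ 8*c*M) :
    c*L ≤ 2*c^((4:ℝ)/3)*(M^((1:ℝ)/3)*L^((1:ℝ)/3) + 2*M^((1:ℝ)/6)*L^((2:ℝ)/3)) := by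
  have hc0 : (0:ℝ) ≤ c := by linarith
  have hM0 : (0:ℝ) ≤ M := by linarith
  have hL0 : (0:ℝ) ≤ L := by linarith
  set q := c ^ ((1:ℝ)/3) with hqdef
  set u := M ^ ((1:ℝ)/6) with hudef
  set v := L ^ ((1:ℝ)/6) with hvdef
  have hq3 : q^3 = c := rpow_cube' c hc0
  have hu6 : u^6 = M := by
    rw [hudef, ← Real.rpow_natCast (M ^ ((1:ℝ)/6)) 6, ← Real.rpow_mul hM0]; norm_num
  have hv6 : v^6 = L := by
    rw [hvdef, ← Real.rpow_natCast (L ^ ((1:ℝ)/6)) 6, ← Real.rpow_mul hL0]; norm_num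
  have hq1 : 1 ≤ q := Real.one_le_rpow hc (by norm_num)
  have hu1 : 1 ≤ u := Real.one_le_rpow hM (by norm_num)
  have hv1 : 1 ≤ v := Real.one_le_rpow hL (by norm_num)
  have hq0 : 0 ≤ q := by linarith
  have hu0 : 0 ≤ u := by linarith
  have hv0 : 0 ≤ v := by linarith
  have e1 : c^((4:ℝ)/3) = q^4 := by
    rw [hqdef, ← Real.rpow_natCast (c ^ ((1:ℝ)/3)) 4, ← Real.rpow_mul hc0]; norm_num
  have e2 : M^((1:ℝ)/3) = u^2 := by
    rw [hudef, ← Real.rpow_natCast (M ^ ((1:ℝ)/6)) 2, ← Real.rpow_mul hM0]; norm_num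
  have e3 : L^((1:ℝ)/3) = v^2 := by
    rw [hvdef, ← Real.rpow_natCast (L ^ ((1:ℝ)/6)) 2, ← Real.rpow_mul hL0]; norm_num
  have e4 : L^((2:ℝ)/3) = v^4 := by
    rw [hvdef, ← Real.rpow_natCast (L ^ ((1:ℝ)/6)) 4, ← Real.rpow_mul hL0]; norm_num
  rw [e1, e2, e3, e4]
  have hv4 : v^4 ≤ 2*q*u^2 := by
    have h3 : (v^4)^3 ≤ (2*q*u^2)^3 := by
      rw [show ((v:ℝ)^4)^3 = (v^6)^2 by ring, hv6]
      rw [show (2*q*u^2)^3 = 8*q^3*(u^6) by ring, hq3, hu6]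
      linarith
    exact (pow_le_pow_iff_left₀ (by positivity) (by positivity) (by norm_num)).mp h3
  have key : c*L = q^3*v^6 := by rw [hq3, hv6]
  rw [key]
  have step : q^3*v^6 ≤ 2*q^4*u^2*v^2 := by
    have := mul_le_mul_of_nonneg_left hv4 (by positivity : (0:ℝ) ≤ q^3*v^2)
    linarith [this]
  have pos2 : (0:ℝ) ≤ 2*q^4*(2*u*v^4) := by positivity
  nlinarith [step, pos2]

lemma sqrt_add_le' (x y : ℝ) (hx : 0 ≤ x) (hy : 0 ≤ y) : Real.sqrt (x + y) ≤ Real.sqrt x + Real.sqrt y := by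
  have h : x + y ≤ (Real.sqrt x + Real.sqrt y)^2 := by
    have hx2 := Real.sq_sqrt hx; have hy2 := Real.sq_sqrt hy
    nlinarith [Real.sqrt_nonneg x, Real.sqrt_nonneg y]
  calc Real.sqrt (x+y) ≤ Real.sqrt ((Real.sqrt x + Real.sqrt y)^2) := Real.sqrt_le_sqrt h
    _ = _ := Real.sqrt_sq (by positivity)

lemma rpow_cube (x : ℝ) (hx : 0 ≤ x) : (x ^ ((1:ℝ)/3))^3 = x := by
  rw [← Real.rpow_natCast (x ^ ((1:ℝ)/3)) 3, ← Real.rpow_mul hx]; norm_num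

lemma rpow_six (x : ℝ) (hx : 0 ≤ x) : (x ^ ((1:ℝ)/6))^6 = x := by
  rw [← Real.rpow_natCast (x ^ ((1:ℝ)/6)) 6, ← Real.rpow_mul hx]; norm_num

lemma endgame (c M L H P S : ℝ) (hc : 1 ≤ c) (hM : 1 ≤ M) (hL : 1 ≤ L) (hLM : L ≤ M)
    (hB : 8*c*M < L^2) (hP : P = (c*M*L) ^ ((1:ℝ)/3)) (hH1 : P ≤ H) (hH2 : H ≤ P+1) (hS : 0 ≤ S)
    (hkey : H * S ≤ c*H^2 + Real.sqrt L * Real.sqrt (c^3*H*M + c*H^2*Real.sqrt M)) :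
    S ≤ 2*c^((4:ℝ)/3)*(M^((1:ℝ)/3)*L^((1:ℝ)/3) + 2*M^((1:ℝ)/6)*L^((2:ℝ)/3)) := by
  have hc0 : (0:ℝ) ≤ c := by linarith
  have hM0 : (0:ℝ) ≤ M := by linarith
  have hL0 : (0:ℝ) ≤ L := by linarith
  set q := c ^ ((1:ℝ)/3) with hqdef
  set u := M ^ ((1:ℝ)/6) with hudef
  set v := L ^ ((1:ℝ)/6) with hvdef
  have hq3 : q^3 = c := rpow_cube c hc0
  have hu6 : u^6 = M := rpow_six M hM0
  have hv6 : v^6 = L := rpow_six L hL0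
  have hq1 : 1 ≤ q := Real.one_le_rpow hc (by norm_num)
  have hu1 : 1 ≤ u := Real.one_le_rpow hM (by norm_num)
  have hv1 : 1 ≤ v := Real.one_le_rpow hL (by norm_num)
  have hq0 : 0 ≤ q := by linarith
  have hu0 : 0 ≤ u := by linarith
  have hv0 : 0 ≤ v := by linarith
  have e1 : c^((4:ℝ)/3) = q^4 := by
    rw [hqdef, ← Real.rpow_natCast (c ^ ((1:ℝ)/3)) 4, ← Real.rpow_mul hc0]; norm_num
  have e2 : M^((1:ℝ)/3) = u^2 := by
    rw [hudef, ← Real.rpow_natCast (M ^ ((1:ℝ)/6)) 2, ← Real.rpow_mul hM0]; norm_num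
  have e3 : L^((1:ℝ)/3) = v^2 := by
    rw [hvdef, ← Real.rpow_natCast (L ^ ((1:ℝ)/6)) 2, ← Real.rpow_mul hL0]; norm_num
  have e4 : L^((2:ℝ)/3) = v^4 := by
    rw [hvdef, ← Real.rpow_natCast (L ^ ((1:ℝ)/6)) 4, ← Real.rpow_mul hL0]; norm_num
  have e5 : Real.sqrt M = u^3 := by
    rw [hudef, ← Real.rpow_natCast (M ^ ((1:ℝ)/6)) 3, ← Real.rpow_mul hM0, Real.sqrt_eq_rpow]
    norm_num
  have e6 : Real.sqrt L = v^3 := by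
    rw [hvdef, ← Real.rpow_natCast (L ^ ((1:ℝ)/6)) 3, ← Real.rpow_mul hL0, Real.sqrt_eq_rpow]
    norm_num
  have ePq : P = q * u^2 * v^2 := by
    rw [hP, Real.mul_rpow (by positivity) hL0, Real.mul_rpow hc0 hM0, ← e2, ← e3, hqdef]
  rw [e1, e2, e3, e4]
  have hMLsq : M < L^2 := by linarith [mul_le_mul_of_nonneg_right hc hM0]
  have huv2 : u^2 ≤ v^4 := by
    have h12 : (u^2)^3 ≤ (v^4)^3 := by
      rw [show (u^2)^3 = u^6 by ring, hu6, show (v^4)^3 = (v^6)^2 by ring, hv6]; linarith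
    exact (pow_le_pow_iff_left₀ (by positivity) (by positivity) (by norm_num)).mp h12
  have huv : u ≤ v^2 := by
    have h2 : u^2 ≤ (v^2)^2 := by linarith
    exact (pow_le_pow_iff_left₀ hu0 (by positivity) (by norm_num)).mp h2
  have hu2' : (1:ℝ) ≤ u^2 := one_le_pow₀ hu1
  have hv2' : (1:ℝ) ≤ v^2 := one_le_pow₀ hv1
  have hqu : (1:ℝ) ≤ q*u^2 := by
    calc (1:ℝ) = 1*1 := (one_mul 1).symm
      _ ≤ q*u^2 := mul_le_mul hq1 hu2' zero_le_one hq0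
  have hP1 : 1 ≤ P := by
    rw [ePq]
    calc (1:ℝ) = 1*1 := (one_mul 1).symm
      _ ≤ (q*u^2)*v^2 := mul_le_mul hqu hv2' zero_le_one (by positivity)
  have hH0 : 1 ≤ H := le_trans hP1 hH1
  have hHpos : 0 < H := by linarith
  have hHP : q*u^2*v^2 ≤ H := ePq ▸ hH1
  have hq3' : c = q^3 := hq3.symm
  rw [hq3', e5, e6, ← hu6] at hkey
  have sqrt_split : Real.sqrt ((q^3)^3*H*u^6 + q^3*H^2*u^3) ≤
      Real.sqrt (q^9*H*u^6) + Real.sqrt (q^3*H^2*u^3) := by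
    rw [show ((q:ℝ)^3)^3 = q^9 by ring]
    exact sqrt_add_le' _ _ (by positivity) (by positivity)
  have piece1 : v^3 * Real.sqrt (q^9*H*u^6) ≤ H * (q^4*u*v^4) := by
    have h2 : (v^3 * Real.sqrt (q^9*H*u^6))^2 ≤ (H * (q^4*u*v^4))^2 := by
      rw [mul_pow, Real.sq_sqrt (by positivity)]
      have hint1 := mul_le_mul_of_nonneg_left huv2 (by positivity : (0:ℝ) ≤ H*q^9*u^4*v^6)
      have hint2 := mul_le_mul_of_nonneg_left
        (mul_le_mul_of_nonneg_left hHP hHpos.le)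
        (by positivity : (0:ℝ) ≤ q^8*u^2*v^8)
      linarith [hint1, hint2]
    exact (pow_le_pow_iff_left₀ (by positivity) (by positivity) (by norm_num)).mp h2
  have piece2 : v^3 * Real.sqrt (q^3*H^2*u^3) ≤ H * (q^4*u*v^4) := by
    have hs : Real.sqrt (q^3*H^2*u^3) = H * Real.sqrt (q^3*u^3) := by
      rw [show q^3*H^2*u^3 = H^2 * (q^3*u^3) by ring, Real.sqrt_mul (by positivity),
        Real.sqrt_sq (by linarith)]
    rw [hs]
    have h2 : v^3 * Real.sqrt (q^3*u^3) ≤ q^4*u*v^4 := by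
      have h3 : (v^3 * Real.sqrt (q^3*u^3))^2 ≤ (q^4*u*v^4)^2 := by
        rw [mul_pow, Real.sq_sqrt (by positivity)]
        have hint1 := mul_le_mul_of_nonneg_left huv (by positivity : (0:ℝ) ≤ q^3*u^2*v^6)
        have hint2 := mul_le_mul_of_nonneg_left
          (pow_le_pow_right₀ hq1 (by norm_num : 3 ≤ 8))
          (by positivity : (0:ℝ) ≤ u^2*v^8)
        linarith [hint1, hint2]
      exact (pow_le_pow_iff_left₀ (by positivity) (by positivity) (by norm_num)).mp h3
    calc v^3 * (H * Real.sqrt (q^3*u^3)) = H * (v^3 * Real.sqrt (q^3*u^3)) := by ring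
      _ ≤ H * (q^4*u*v^4) := mul_le_mul_of_nonneg_left h2 (by linarith)
  have piece3 : q^3 * H^2 ≤ H * (2*q^4*u^2*v^2) := by
    have hH2' : H ≤ 2*(q*u^2*v^2) := by
      have h1 : (1:ℝ) ≤ q*u^2*v^2 := ePq ▸ hP1
      calc H ≤ P + 1 := hH2
        _ = q*u^2*v^2 + 1 := by rw [ePq]
        _ ≤ 2*(q*u^2*v^2) := by linarith
    calc q^3*H^2 = H * (q^3 * H) := by ring
      _ ≤ H * (q^3 * (2*(q*u^2*v^2))) := by
          refine mul_le_mul_of_nonneg_left ?_ (by linarith)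
          exact mul_le_mul_of_nonneg_left hH2' (by positivity)
      _ = H * (2*q^4*u^2*v^2) := by ring
  have total : H * S ≤ H * (2*q^4*(u^2*v^2 + 2*u*v^4)) := by
    have hsplit := mul_le_mul_of_nonneg_left sqrt_split (by positivity : (0:ℝ) ≤ v^3)
    rw [mul_add] at hsplit
    have hpos : (0:ℝ) ≤ H*(q^4*u*v^4) := by positivity
    linarith [piece1, piece2, piece3, hkey, hsplit, hpos]
  exact le_of_mul_le_mul_left total hHpos



theorem sliding_sum_condition_H (m : ℕ) [NeZero m] (c : ℝ) (hc : 1 ≤ c)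
    (φ : ZMod m → ℂ) (hφ : ∀ x, ‖φ x‖ ≤ c)
    (D : Finset (ZMod m)) (hD : (D.card : ℝ) ≤ c)
    (hcorr : ∀ a : ZMod m, a ∉ D → ‖corr φ a‖ ≤ c * Real.sqrt m)
    (I : Finset (ZMod m)) (hI : IsInterval I) :
    ‖∑ n ∈ I, φ n‖ ≤
      2 * c ^ ((4 : ℝ) / 3) * ((m : ℝ) ^ ((1 : ℝ) / 3) * (I.card : ℝ) ^ ((1 : ℝ) / 3)
        + 2 * (m : ℝ) ^ ((1 : ℝ) / 6) * (I.card : ℝ) ^ ((2 : ℝ) / 3)) := by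
  classical
  obtain ⟨a, b, hinj, hIeq⟩ := hI
  set J : Finset ℤ := Finset.Icc a b with hJdef
  have hinj' : ∀ x ∈ J, ∀ y ∈ J, ((x:ℤ):ZMod m) = ((y:ℤ):ZMod m) → x = y :=
    fun x hx y hy h => hinj (by simpa using hx) (by simpa using hy) h
  have hsum : ∑ n ∈ I, φ n = ∑ t ∈ J, φ ((t:ℤ):ZMod m) := by
    rw [hIeq]; exact Finset.sum_image hinj'
  have hcard : I.card = J.card := by rw [hIeq]; exact Finset.card_image_of_injOn hinj
  have hc0 : (0:ℝ) ≤ c := by linarith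
  have hm1 : (1:ℝ) ≤ (m:ℝ) := by
    exact_mod_cast Nat.one_le_iff_ne_zero.mpr (NeZero.ne m)
  rcases Finset.eq_empty_or_nonempty I with hIe | hIne
  · subst hIe
    simp only [Finset.sum_empty, norm_zero, Finset.card_empty, Nat.cast_zero]
    rw [Real.zero_rpow (by norm_num), Real.zero_rpow (by norm_num)]
    norm_num
  have hL1 : 1 ≤ I.card := Finset.card_pos.mpr hIne
  have hL1' : (1:ℝ) ≤ (I.card:ℝ) := by exact_mod_cast hL1
  have hLm : I.card ≤ m := by
    calc I.card ≤ Fintype.card (ZMod m) := Finset.card_le_univ I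
      _ = m := ZMod.card m
  have hLm' : ((I.card:ℕ):ℝ) ≤ (m:ℝ) := by exact_mod_cast hLm
  by_cases hAB : ((I.card:ℝ))^2 ≤ 8*c*(m:ℝ)
  · -- Case A : trivial bound
    calc ‖∑ n ∈ I, φ n‖ ≤ ∑ n ∈ I, ‖φ n‖ :=
          norm_sum_le _ _
      _ ≤ ∑ _n ∈ I, c := Finset.sum_le_sum fun i _ => hφ i
      _ = c * I.card := by rw [Finset.sum_const, nsmul_eq_mul]; ring
      _ ≤ _ := caseA_bound c (m:ℝ) (I.card:ℝ) hc hm1 hL1' hAB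
  · -- Case B
    push_neg at hAB
    set P : ℝ := (c * (m:ℝ) * (I.card:ℝ)) ^ ((1:ℝ)/3) with hPdef
    have hcmL0 : (0:ℝ) ≤ c * (m:ℝ) * (I.card:ℝ) := by positivity
    have hcmL1 : (1:ℝ) ≤ c * (m:ℝ) * (I.card:ℝ) := by
      calc (1:ℝ) = 1*1*1 := by norm_num
        _ ≤ c * (m:ℝ) * (I.card:ℝ) :=
          mul_le_mul (mul_le_mul hc hm1 zero_le_one hc0) hL1' zero_le_one (by positivity)
    have hP0 : 0 ≤ P := Real.rpow_nonneg hcmL0 _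
    have hP1 : 1 ≤ P := Real.one_le_rpow hcmL1 (by norm_num)
    set H : ℕ := ⌈P⌉₊ with hHdef
    have hH1 : P ≤ (H:ℝ) := Nat.le_ceil P
    have hH2 : (H:ℝ) ≤ P + 1 := (Nat.ceil_lt_add_one hP0).le
    have hHpos : 0 < H := Nat.ceil_pos.mpr (by linarith)
    have hH1' : (1:ℝ) ≤ (H:ℝ) := by linarith
    have hHm : H ≤ m := by
      rw [hHdef]
      refine Nat.ceil_le.mpr ?_
      have hP3 : P^3 = c * (m:ℝ) * (I.card:ℝ) := rpow_cube' _ hcmL0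
      have hL3 : ((I.card:ℝ))^3 ≤ ((m:ℝ))^3 :=
        pow_le_pow_left₀ (by linarith) hLm' 3
      have h8 : 8*c*(m:ℝ)*(I.card:ℝ) < ((I.card:ℝ))^2 * (I.card:ℝ) :=
        mul_lt_mul_of_pos_right hAB (by linarith)
      have hcm3 : c * (m:ℝ) * (I.card:ℝ) ≤ ((m:ℝ))^3 := by nlinarith
      have : P^3 ≤ ((m:ℝ))^3 := by rw [hP3]; exact hcm3
      exact (pow_le_pow_iff_left₀ hP0 (by linarith) (by norm_num)).mp this
    -- injectivity of Nat.cast on range H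
    have hinjH : ∀ x ∈ Finset.range H, ∀ y ∈ Finset.range H,
        ((x:ℕ):ZMod m) = ((y:ℕ):ZMod m) → x = y := by
      intro x hx y hy hxy
      have hx' : x < m := lt_of_lt_of_le (Finset.mem_range.mp hx) hHm
      have hy' : y < m := lt_of_lt_of_le (Finset.mem_range.mp hy) hHm
      have := congrArg ZMod.val hxy
      rwa [ZMod.val_natCast_of_lt hx', ZMod.val_natCast_of_lt hy'] at this
    set T : ZMod m → ℂ := fun x => ∑ h ∈ Finset.range H, φ (x + (h:ZMod m)) with hTdef
    -- trivial correlation bound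
    have hcorr_triv : ∀ d : ZMod m, ‖corr φ d‖ ≤ c^2 * m := by
      intro d
      calc ‖corr φ d‖
          ≤ ∑ x : ZMod m, ‖φ x * (starRingEnd ℂ) (φ (x+d))‖ :=
            norm_sum_le _ _
        _ ≤ ∑ _x : ZMod m, c * c := by
            refine Finset.sum_le_sum fun x _ => ?_
            rw [norm_mul, Complex.norm_conj]
            exact mul_le_mul (hφ x) (hφ _) (norm_nonneg _) hc0
        _ = c^2 * m := by
            rw [Finset.sum_const, Finset.card_univ, ZMod.card, nsmul_eq_mul]; ring
    -- rewrite correlation sums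
    have hcorr_rw : ∀ h h' : ℕ,
        (∑ x : ZMod m, φ (x + (h:ZMod m)) * (starRingEnd ℂ) (φ (x + (h':ZMod m))))
          = corr φ ((h':ZMod m) - (h:ZMod m)) := by
      intro h h'
      rw [corr]
      refine Fintype.sum_equiv (Equiv.addRight ((h:ℕ):ZMod m)) _ _ (fun x => ?_)
      have hx : x + ((h':ℕ):ZMod m) = (x + ((h:ℕ):ZMod m)) + (((h':ℕ):ZMod m) - ((h:ℕ):ZMod m)) := by
        ring
      rw [Equiv.coe_addRight, ← hx]
    -- the big second-moment bound
    have hSigma : ∑ x : ZMod m, Complex.normSq (T x)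
        ≤ c^3 * (H:ℝ) * (m:ℝ) + c * (H:ℝ)^2 * Real.sqrt m := by
      have expand : (∑ x : ZMod m, (Complex.normSq (T x) : ℂ))
          = ∑ h ∈ Finset.range H, ∑ h' ∈ Finset.range H,
              corr φ ((h':ZMod m) - (h:ZMod m)) := by
        have e1 : ∀ x : ZMod m, (Complex.normSq (T x) : ℂ)
            = ∑ h ∈ Finset.range H, ∑ h' ∈ Finset.range H,
                φ (x + (h:ZMod m)) * (starRingEnd ℂ) (φ (x + (h':ZMod m))) := by
          intro x
          rw [← Complex.mul_conj, hTdef]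
          rw [map_sum, Finset.sum_mul_sum]
        calc (∑ x : ZMod m, (Complex.normSq (T x) : ℂ))
            = ∑ x : ZMod m, ∑ h ∈ Finset.range H, ∑ h' ∈ Finset.range H,
                φ (x + (h:ZMod m)) * (starRingEnd ℂ) (φ (x + (h':ZMod m))) :=
              Finset.sum_congr rfl fun x _ => e1 x
          _ = ∑ h ∈ Finset.range H, ∑ x : ZMod m, ∑ h' ∈ Finset.range H,
                φ (x + (h:ZMod m)) * (starRingEnd ℂ) (φ (x + (h':ZMod m))) :=
              Finset.sum_comm
          _ = ∑ h ∈ Finset.range H, ∑ h' ∈ Finset.range H, ∑ x : ZMod m,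
                φ (x + (h:ZMod m)) * (starRingEnd ℂ) (φ (x + (h':ZMod m))) :=
              Finset.sum_congr rfl fun h _ => Finset.sum_comm
          _ = _ := Finset.sum_congr rfl fun h _ => Finset.sum_congr rfl fun h' _ =>
              hcorr_rw h h'
      have inner : ∀ h : ℕ, ∑ h' ∈ Finset.range H,
          ‖corr φ ((h':ZMod m) - (h:ZMod m))‖
            ≤ c * (c^2*(m:ℝ)) + (H:ℝ) * (c * Real.sqrt m) := by
        intro h
        rw [← Finset.sum_filter_add_sum_filter_not (Finset.range H)
          (fun h' : ℕ => ((h':ZMod m) - (h:ZMod m)) ∈ D)]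
        have b1 : ∑ h' ∈ (Finset.range H).filter
              (fun h' : ℕ => ((h':ZMod m) - (h:ZMod m)) ∈ D),
            ‖corr φ ((h':ZMod m) - (h:ZMod m))‖
              ≤ c * (c^2*(m:ℝ)) := by
          have cardb : (((Finset.range H).filter
              (fun h' : ℕ => ((h':ZMod m) - (h:ZMod m)) ∈ D)).card : ℝ) ≤ c := by
            refine le_trans ?_ hD
            have : ((Finset.range H).filter
                (fun h' : ℕ => ((h':ZMod m) - (h:ZMod m)) ∈ D)).card ≤ D.card := by
              refine Finset.card_le_card_of_injOn
                (fun h' => ((h':ZMod m) - (h:ZMod m))) ?_ ?_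
              · intro x hx; exact (Finset.mem_filter.mp hx).2
              · intro x hx y hy hxy
                have hx' := Finset.mem_filter.mp hx
                have hy' := Finset.mem_filter.mp hy
                exact hinjH x hx'.1 y hy'.1 (sub_left_inj.mp hxy)
            exact_mod_cast this
          calc ∑ h' ∈ (Finset.range H).filter
                (fun h' : ℕ => ((h':ZMod m) - (h:ZMod m)) ∈ D),
              ‖corr φ ((h':ZMod m) - (h:ZMod m))‖
              ≤ ∑ _h' ∈ (Finset.range H).filter
                (fun h' : ℕ => ((h':ZMod m) - (h:ZMod m)) ∈ D), (c^2*(m:ℝ)) :=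
                Finset.sum_le_sum fun i _ => hcorr_triv _
            _ = (((Finset.range H).filter
                (fun h' : ℕ => ((h':ZMod m) - (h:ZMod m)) ∈ D)).card : ℝ) * (c^2*(m:ℝ)) := by
                rw [Finset.sum_const, nsmul_eq_mul]
            _ ≤ c * (c^2*(m:ℝ)) := by
                refine mul_le_mul_of_nonneg_right cardb (by positivity)
        have b2 : ∑ h' ∈ (Finset.range H).filter
              (fun h' : ℕ => ¬ ((h':ZMod m) - (h:ZMod m)) ∈ D),
            ‖corr φ ((h':ZMod m) - (h:ZMod m))‖
              ≤ (H:ℝ) * (c * Real.sqrt m) := by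
          calc ∑ h' ∈ (Finset.range H).filter
                (fun h' : ℕ => ¬ ((h':ZMod m) - (h:ZMod m)) ∈ D),
              ‖corr φ ((h':ZMod m) - (h:ZMod m))‖
              ≤ ∑ _h' ∈ (Finset.range H).filter
                (fun h' : ℕ => ¬ ((h':ZMod m) - (h:ZMod m)) ∈ D), (c * Real.sqrt m) := by
                refine Finset.sum_le_sum fun i hi => ?_
                exact hcorr _ (Finset.mem_filter.mp hi).2
            _ = (((Finset.range H).filter
                (fun h' : ℕ => ¬ ((h':ZMod m) - (h:ZMod m)) ∈ D)).card : ℝ) * (c * Real.sqrt m) := by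
                rw [Finset.sum_const, nsmul_eq_mul]
            _ ≤ (H:ℝ) * (c * Real.sqrt m) := by
                refine mul_le_mul_of_nonneg_right ?_ (by positivity)
                have := Finset.card_filter_le (Finset.range H)
                  (fun h' : ℕ => ¬ ((h':ZMod m) - (h:ZMod m)) ∈ D)
                rw [Finset.card_range] at this
                exact_mod_cast this
        linarith
      have hre : ∑ x : ZMod m, Complex.normSq (T x)
          = (∑ x : ZMod m, (Complex.normSq (T x) : ℂ)).re := by
        rw [Complex.re_sum]
        simp
      rw [hre, expand]
      calc (∑ h ∈ Finset.range H, ∑ h' ∈ Finset.range H,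
              corr φ ((h':ZMod m) - (h:ZMod m))).re
          ≤ ‖∑ h ∈ Finset.range H, ∑ h' ∈ Finset.range H,
              corr φ ((h':ZMod m) - (h:ZMod m))‖ := Complex.re_le_norm _
        _ ≤ ∑ h ∈ Finset.range H, ‖∑ h' ∈ Finset.range H,
              corr φ ((h':ZMod m) - (h:ZMod m))‖ := norm_sum_le _ _
        _ ≤ ∑ h ∈ Finset.range H, ∑ h' ∈ Finset.range H,
              ‖corr φ ((h':ZMod m) - (h:ZMod m))‖ :=
            Finset.sum_le_sum fun h _ => norm_sum_le _ _
        _ ≤ ∑ _h ∈ Finset.range H, (c * (c^2*(m:ℝ)) + (H:ℝ) * (c * Real.sqrt m)) :=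
            Finset.sum_le_sum fun h _ => inner h
        _ = (H:ℝ) * (c * (c^2*(m:ℝ)) + (H:ℝ) * (c * Real.sqrt m)) := by
            rw [Finset.sum_const, Finset.card_range, nsmul_eq_mul]
        _ = c^3 * (H:ℝ) * (m:ℝ) + c * (H:ℝ)^2 * Real.sqrt m := by ring
    -- sliding bound
    have hslide : ∀ h : ℕ, ‖(∑ t ∈ J, φ ((t:ℤ):ZMod m))
        - ∑ t ∈ J, φ (((t:ℤ):ZMod m) + ((h:ℕ):ZMod m))‖ ≤ 2*c*(h:ℝ) := by
      intro h
      have castq : ∀ t : ℤ, ((t:ZMod m) + ((h:ℕ):ZMod m)) = (((t + (h:ℤ)):ℤ):ZMod m) := by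
        intro t; push_cast; ring
      have e1 : ∑ t ∈ J, φ (((t:ℤ):ZMod m) + ((h:ℕ):ZMod m))
          = ∑ t ∈ Finset.Icc (a + (h:ℤ)) (b + (h:ℤ)), φ ((t:ℤ):ZMod m) := by
        rw [← Finset.image_add_right_Icc]
        rw [Finset.sum_image (fun x _ y _ hxy => by omega)]
        exact Finset.sum_congr rfl fun t _ => congrArg φ (castq t)
      set J' : Finset ℤ := Finset.Icc (a + (h:ℤ)) (b + (h:ℤ)) with hJ'def
      rw [e1, ← Finset.sum_sdiff_sub_sum_sdiff]
      have habs : ∀ (s : Finset ℤ) (n : ℕ), s.card ≤ n →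
          ‖∑ t ∈ s, φ ((t:ℤ):ZMod m)‖ ≤ c * n := by
        intro s n hn
        have hcs : (s.card:ℝ) ≤ (n:ℝ) := by exact_mod_cast hn
        calc ‖∑ t ∈ s, φ ((t:ℤ):ZMod m)‖
            ≤ ∑ t ∈ s, ‖φ ((t:ℤ):ZMod m)‖ := norm_sum_le _ _
          _ ≤ ∑ _t ∈ s, c := Finset.sum_le_sum fun i _ => hφ _
          _ = (s.card:ℝ) * c := by rw [Finset.sum_const, nsmul_eq_mul]
          _ ≤ c * n := by nlinarith
      have hc1 : (J \ J').card ≤ h := by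
        have hsub : J \ J' ⊆ Finset.Ico a (a + (h:ℤ)) := by
          intro x hx
          simp only [hJdef, hJ'def, Finset.mem_sdiff, Finset.mem_Icc, Finset.mem_Ico,
            not_and, not_le] at hx ⊢
          omega
        calc (J \ J').card ≤ (Finset.Ico a (a + (h:ℤ))).card := Finset.card_le_card hsub
          _ = h := by rw [Int.card_Ico]; simp
      have hc2 : (J' \ J).card ≤ h := by
        have hsub : J' \ J ⊆ Finset.Ico (b+1) (b + 1 + (h:ℤ)) := by
          intro x hx
          simp only [hJdef, hJ'def, Finset.mem_sdiff, Finset.mem_Icc, Finset.mem_Ico,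
            not_and, not_le] at hx ⊢
          omega
        calc (J' \ J).card ≤ (Finset.Ico (b+1) (b + 1 + (h:ℤ))).card :=
              Finset.card_le_card hsub
          _ = h := by rw [Int.card_Ico]; simp
      calc ‖∑ t ∈ J \ J', φ ((t:ℤ):ZMod m) - ∑ t ∈ J' \ J, φ ((t:ℤ):ZMod m)‖
          ≤ ‖∑ t ∈ J \ J', φ ((t:ℤ):ZMod m)‖
            + ‖∑ t ∈ J' \ J, φ ((t:ℤ):ZMod m)‖ := by
            simpa [sub_eq_add_neg, norm_neg] using
              norm_add_le (∑ t ∈ J \ J', φ ((t:ℤ):ZMod m))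
                (-(∑ t ∈ J' \ J, φ ((t:ℤ):ZMod m)))
        _ ≤ c*(h:ℝ) + c*(h:ℝ) := add_le_add (habs _ h hc1) (habs _ h hc2)
        _ = 2*c*(h:ℝ) := by ring
    -- Gauss sum bound
    have hGauss : ∑ h ∈ Finset.range H, (2*c*(h:ℝ)) ≤ c * (H:ℝ)^2 := by
      have hid := Finset.sum_range_id_mul_two H
      have hH1n : 1 ≤ H := hHpos
      have hcast : ((∑ h ∈ Finset.range H, h : ℕ):ℝ) * 2 = (H:ℝ) * ((H:ℝ) - 1) := by
        have h2 : ((H * (H-1) : ℕ) : ℝ) = (H:ℝ)*((H:ℝ)-1) := by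
          push_cast [Nat.cast_sub hH1n]; ring
        rw [← h2, ← hid]; push_cast; ring
      have hsum2 : ∑ h ∈ Finset.range H, (2*c*(h:ℝ))
          = 2*c*((∑ h ∈ Finset.range H, h : ℕ):ℝ) := by
        rw [← Finset.mul_sum]; push_cast; ring
      nlinarith [hH1']
    -- Cauchy–Schwarz
    have hCS : ‖∑ t ∈ J, T ((t:ℤ):ZMod m)‖
        ≤ Real.sqrt (I.card) * Real.sqrt (c^3*(H:ℝ)*(m:ℝ) + c*(H:ℝ)^2*Real.sqrt m) := by
      have h1 : ‖∑ t ∈ J, T ((t:ℤ):ZMod m)‖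
          ≤ ∑ t ∈ J, ‖T ((t:ℤ):ZMod m)‖ := norm_sum_le _ _
      have h2 : (∑ t ∈ J, ‖T ((t:ℤ):ZMod m)‖)^2
          ≤ (J.card:ℝ) * ∑ t ∈ J, (‖T ((t:ℤ):ZMod m)‖)^2 :=
        sq_sum_le_card_mul_sum_sq
      have h3 : ∑ t ∈ J, (‖T ((t:ℤ):ZMod m)‖)^2
          = ∑ x ∈ I, (‖T x‖)^2 := by
        rw [hIeq, Finset.sum_image hinj']
      have h4 : ∑ x ∈ I, (‖T x‖)^2 ≤ ∑ x : ZMod m, (‖T x‖)^2 :=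
        Finset.sum_le_sum_of_subset_of_nonneg (Finset.subset_univ I)
          (fun _ _ _ => sq_nonneg _)
      have h5 : ∑ x : ZMod m, (‖T x‖)^2
          = ∑ x : ZMod m, Complex.normSq (T x) := by
        simp [Complex.sq_norm]
      have h6 : ∑ t ∈ J, (‖T ((t:ℤ):ZMod m)‖)^2
          ≤ c^3*(H:ℝ)*(m:ℝ) + c*(H:ℝ)^2*Real.sqrt m := by
        rw [h3]; rw [h5] at h4; linarith [hSigma]
      have hbnd0 : (0:ℝ) ≤ c^3*(H:ℝ)*(m:ℝ) + c*(H:ℝ)^2*Real.sqrt m := by positivity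
      have h7 : ∑ t ∈ J, ‖T ((t:ℤ):ZMod m)‖
          ≤ Real.sqrt ((J.card:ℝ) * (c^3*(H:ℝ)*(m:ℝ) + c*(H:ℝ)^2*Real.sqrt m)) :=
        Real.le_sqrt_of_sq_le
          (h2.trans (mul_le_mul_of_nonneg_left h6 (by positivity)))
      calc ‖∑ t ∈ J, T ((t:ℤ):ZMod m)‖
          ≤ ∑ t ∈ J, ‖T ((t:ℤ):ZMod m)‖ := h1
        _ ≤ Real.sqrt ((J.card:ℝ) * (c^3*(H:ℝ)*(m:ℝ) + c*(H:ℝ)^2*Real.sqrt m)) := h7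
        _ = Real.sqrt (I.card) * Real.sqrt (c^3*(H:ℝ)*(m:ℝ) + c*(H:ℝ)^2*Real.sqrt m) := by
            rw [hcard, Real.sqrt_mul (by positivity)]
    -- key identity
    have hkeyC : ((H:ℕ):ℂ) * (∑ t ∈ J, φ ((t:ℤ):ZMod m))
        = (∑ h ∈ Finset.range H, ((∑ t ∈ J, φ ((t:ℤ):ZMod m))
            - ∑ t ∈ J, φ (((t:ℤ):ZMod m) + ((h:ℕ):ZMod m))))
          + ∑ t ∈ J, T ((t:ℤ):ZMod m) := by
      have hTc : ∑ t ∈ J, T ((t:ℤ):ZMod m)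
          = ∑ h ∈ Finset.range H, ∑ t ∈ J, φ (((t:ℤ):ZMod m) + ((h:ℕ):ZMod m)) := by
        rw [hTdef]; exact Finset.sum_comm
      rw [hTc, Finset.sum_sub_distrib, Finset.sum_const, Finset.card_range, nsmul_eq_mul]
      ring
    -- main inequality
    have hkeyR : (H:ℝ) * ‖∑ t ∈ J, φ ((t:ℤ):ZMod m)‖
        ≤ c * (H:ℝ)^2
          + Real.sqrt (I.card) * Real.sqrt (c^3*(H:ℝ)*(m:ℝ) + c*(H:ℝ)^2*Real.sqrt m) := by
      have e0 : (H:ℝ) * ‖∑ t ∈ J, φ ((t:ℤ):ZMod m)‖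
          = ‖((H:ℕ):ℂ) * ∑ t ∈ J, φ ((t:ℤ):ZMod m)‖ := by
        rw [norm_mul, Complex.norm_natCast]
      rw [e0, hkeyC]
      calc ‖(∑ h ∈ Finset.range H, ((∑ t ∈ J, φ ((t:ℤ):ZMod m))
              - ∑ t ∈ J, φ (((t:ℤ):ZMod m) + ((h:ℕ):ZMod m))))
            + ∑ t ∈ J, T ((t:ℤ):ZMod m)‖
          ≤ ‖∑ h ∈ Finset.range H, ((∑ t ∈ J, φ ((t:ℤ):ZMod m))
              - ∑ t ∈ J, φ (((t:ℤ):ZMod m) + ((h:ℕ):ZMod m)))‖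
            + ‖∑ t ∈ J, T ((t:ℤ):ZMod m)‖ := norm_add_le _ _
        _ ≤ (∑ h ∈ Finset.range H, (2*c*(h:ℝ)))
            + Real.sqrt (I.card) * Real.sqrt (c^3*(H:ℝ)*(m:ℝ) + c*(H:ℝ)^2*Real.sqrt m) := by
            refine add_le_add (le_trans (norm_sum_le _ _)
              (Finset.sum_le_sum fun h _ => hslide h)) hCS
        _ ≤ c * (H:ℝ)^2
            + Real.sqrt (I.card) * Real.sqrt (c^3*(H:ℝ)*(m:ℝ) + c*(H:ℝ)^2*Real.sqrt m) := by
            linarith [hGauss]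
    rw [hsum]
    exact endgame c (m:ℝ) (I.card:ℝ) (H:ℝ) P
      (‖∑ t ∈ J, φ ((t:ℤ):ZMod m)‖) hc hm1 hL1' hLm' hAB hPdef hH1 hH2
      (norm_nonneg _) hkeyR
end

section
/- Let m ≥ 1, φ : ℤ/mℤ → ℂ with ‖φ‖_∞ = ν > 0, I an interval in ℤ/mℤ, and S = |∑_{n∈I} φ(n)|. For every ε > 0, if S/ν is large enough in terms of ε, then ∑_{a ∈ ℤ/mℤ} |∑_{n ∈ a+I} φ(n)|² ≥ (1/3 − ε)·S³/ν. -/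
open Finset

private theorem tele_aux (g : ℤ → ℂ) (a : ℤ) : ∀ b : ℤ, a ≤ b →
    ∑ j ∈ Icc a b, (g (j+1) - g j) = g (b+1) - g a := by
  refine Int.le_induction ?_ ?_
  · simp
  · intro b hb ih
    have h1 : Icc a (b+1) = insert (b+1) (Icc a b) := by
      ext x; simp [Finset.mem_Icc]; omega
    have h2 : b + 1 ∉ Icc a b := by simp
    rw [h1, Finset.sum_insert h2, ih]; ring

private theorem tel_bound (S ν : ℝ) (hν : 0 < ν) : ∀ K : ℕ,
    (∀ n : ℕ, n ≤ K → ν ≤ S - 2*ν*n) →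
    (S^3 - (S - 2*ν*((K:ℝ)+1))^3)/(6*ν) ≤ ∑ n ∈ Finset.range (K+1), (S - 2*ν*n)^2 := by
  intro K
  induction K with
  | zero =>
    intro hp
    have h0 := hp 0 le_rfl
    simp only [zero_add, Finset.sum_range_one, Nat.cast_zero] at *
    rw [div_le_iff₀ (by positivity)]
    nlinarith [mul_le_mul_of_nonneg_right h0 (mul_pos hν hν).le]
  | succ K ih =>
    intro hp
    have h1 := ih (fun n hn => hp n (hn.trans (Nat.le_succ K)))
    have h2 := hp (K+1) le_rfl
    rw [Finset.sum_range_succ]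
    have h3 : ((K+1:ℕ):ℝ) = (K:ℝ)+1 := by push_cast; ring
    rw [h3] at h2 ⊢
    have h5 : S^3 - (S - 2*ν*((K:ℝ)+1+1))^3
        ≤ (S^3 - (S - 2*ν*((K:ℝ)+1))^3) + (S - 2*ν*((K:ℝ)+1))^2*(6*ν) := by
      nlinarith [mul_le_mul_of_nonneg_right h2 (mul_pos hν hν).le]
    have h4 : (S^3 - (S - 2*ν*((K:ℝ)+1+1))^3)/(6*ν)
        ≤ (S^3 - (S - 2*ν*((K:ℝ)+1))^3)/(6*ν) + (S - 2*ν*((K:ℝ)+1))^2 := by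
      have e : ((S^3 - (S - 2*ν*((K:ℝ)+1))^3) + (S - 2*ν*((K:ℝ)+1))^2*(6*ν))/(6*ν)
          = (S^3 - (S - 2*ν*((K:ℝ)+1))^3)/(6*ν) + (S - 2*ν*((K:ℝ)+1))^2 := by
        field_simp
      rw [← e]
      exact div_le_div_of_nonneg_right h5 (by positivity)
    linarith

private theorem shift_sum (S ν : ℝ) (K : ℕ) :
    ∑ n ∈ Finset.range K, (S - 2*ν*((n:ℝ)+1))^2
      = ∑ n ∈ Finset.range (K+1), (S - 2*ν*(n:ℝ))^2 - S^2 := by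
  induction K with
  | zero => simp
  | succ K ih =>
    rw [Finset.sum_range_succ, ih, Finset.sum_range_succ (fun n : ℕ => (S - 2*ν*(n:ℝ))^2) (K+1)]
    push_cast
    ring

set_option maxHeartbeats 1000000 in
/-- Lemma (lm-interval): the sliding-sum lower bound over translates of an interval. -/
theorem sliding_sum_lower_bound (ε : ℝ) (hε : 0 < ε) :
    ∃ A : ℝ, ∀ (m : ℕ) [NeZero m] (φ : ZMod m → ℂ) (ν : ℝ),
      (∀ x, ‖φ x‖ ≤ ν) → (∃ x, ‖φ x‖ = ν) → 0 < ν →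
      ∀ I : Finset (ZMod m), IsInterval I →
      A ≤ ‖∑ n ∈ I, φ n‖ / ν →
      (1 / 3 - ε) * (‖∑ n ∈ I, φ n‖) ^ 3 / ν ≤
        ∑ a : ZMod m, (‖∑ n ∈ I, φ (n + a)‖) ^ 2 := by
  refine ⟨3 + 3/ε, ?_⟩
  intro m _ φ ν hbound _hattain hν I hI hA
  obtain ⟨a, b, hinj, hIab⟩ := hI
  set S : ℝ := ‖∑ n ∈ I, φ n‖ with hS
  set x : ℝ := S / ν with hxdef
  have hε3 : (3:ℝ)/ε > 0 := by positivity
  have hx3 : (3:ℝ) ≤ x := by linarith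
  have hxε : 3/ε ≤ x := by linarith
  have hSx : S = x * ν := by rw [hxdef, div_mul_cancel₀ _ hν.ne']
  have hSpos : 0 < S := by nlinarith
  -- F t : the sum over the interval shifted by t
  set F : ℤ → ℂ := fun t => ∑ j ∈ Icc a b, φ ((j + t : ℤ) : ZMod m) with hF
  have hinj' : ∀ u ∈ Icc a b, ∀ v ∈ Icc a b, (u : ZMod m) = v → u = v := by
    intro u hu v hv h
    exact hinj (by exact_mod_cast hu) (by exact_mod_cast hv) h
  have hFt : ∀ t : ℤ, (∑ n ∈ I, φ (n + (t : ZMod m))) = F t := by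
    intro t
    rw [hIab, Finset.sum_image hinj']
    refine Finset.sum_congr rfl fun j hj => ?_
    push_cast
    ring_nf
  have hF0 : ‖F 0‖ = S := by
    rw [hS, hIab, Finset.sum_image hinj']
    simp [hF]
  -- interval nonempty
  have hab : a ≤ b := by
    by_contra h
    have : Icc a b = ∅ := Finset.Icc_eq_empty (by omega)
    rw [hS, hIab, this] at hSpos
    simp at hSpos
  -- one-step shift bound
  have hstep : ∀ t : ℤ, ‖F (t+1) - F t‖ ≤ 2 * ν := by
    intro t
    have h1 : F (t+1) - F t = ∑ j ∈ Icc a b,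
        ((fun j : ℤ => φ ((j + t : ℤ) : ZMod m)) (j+1)
          - (fun j : ℤ => φ ((j + t : ℤ) : ZMod m)) j) := by
      rw [Finset.sum_sub_distrib, hF]
      congr 1
      refine Finset.sum_congr rfl fun j hj => ?_
      congr 2
      push_cast
      ring
    rw [h1, tele_aux (fun j : ℤ => φ ((j + t : ℤ) : ZMod m)) a b hab]
    calc ‖_‖ ≤ ‖φ ((b + 1 + t : ℤ) : ZMod m)‖
        + ‖φ ((a + t : ℤ) : ZMod m)‖ := by
          simpa using norm_sub_le_norm_sub_add_norm_sub (φ ((b + 1 + t : ℤ) : ZMod m)) 0 (φ ((a + t : ℤ) : ZMod m))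
      _ ≤ ν + ν := add_le_add (hbound _) (hbound _)
      _ = 2 * ν := by ring
  -- shift bound from 0, both directions
  have hpos : ∀ n : ℕ, ‖F n - F 0‖ ≤ 2 * n * ν := by
    intro n
    induction n with
    | zero => simp
    | succ n ih =>
      have := hstep n
      calc ‖F (n+1) - F 0‖
          ≤ ‖F ((n:ℤ)+1) - F n‖ + ‖F n - F 0‖ := by
            push_cast
            simpa using norm_sub_le_norm_sub_add_norm_sub (F ((n:ℤ)+1)) (F n) (F 0)
        _ ≤ 2 * ν + 2 * n * ν := add_le_add this ih
        _ = 2 * ((n:ℕ)+1:ℕ) * ν := by push_cast; ring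
  have hneg : ∀ n : ℕ, ‖F (-(n:ℤ)) - F 0‖ ≤ 2 * n * ν := by
    intro n
    induction n with
    | zero => simp
    | succ n ih =>
      have h2 := hstep (-(n:ℤ)-1)
      have h3 : (-(n:ℤ)-1) + 1 = -(n:ℤ) := by ring
      rw [h3] at h2
      have h4 : (-((n:ℕ)+1:ℕ):ℤ) = -(n:ℤ)-1 := by push_cast; ring
      rw [h4]
      calc ‖F (-(n:ℤ)-1) - F 0‖
          ≤ ‖F (-(n:ℤ)-1) - F (-(n:ℤ))‖ + ‖F (-(n:ℤ)) - F 0‖ := by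
            simpa using norm_sub_le_norm_sub_add_norm_sub (F (-(n:ℤ)-1)) (F (-(n:ℤ))) (F 0)
        _ ≤ 2 * ν + 2 * n * ν :=
            add_le_add (by simpa [norm_sub_rev] using h2) ih
        _ = 2 * ((n:ℕ)+1:ℕ) * ν := by push_cast; ring
  -- lower bounds on |F|
  have hlowp : ∀ n : ℕ, S - 2*ν*n ≤ ‖F n‖ := by
    intro n
    have h1 : S ≤ ‖F n‖ + 2*n*ν := by
      have h2 : F (n:ℤ) + (F 0 - F (n:ℤ)) = F 0 := by ring
      calc S = ‖F 0‖ := hF0.symm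
        _ = ‖F (n:ℤ) + (F 0 - F (n:ℤ))‖ := by rw [h2]
        _ ≤ ‖F (n:ℤ)‖ + ‖F 0 - F (n:ℤ)‖ := norm_add_le _ _
        _ ≤ ‖F (n:ℤ)‖ + 2*n*ν := by
            have := hpos n
            rw [← norm_sub_rev] at this
            linarith
    linarith
  have hlown : ∀ n : ℕ, S - 2*ν*n ≤ ‖F (-(n:ℤ))‖ := by
    intro n
    have h1 : S ≤ ‖F (-(n:ℤ))‖ + 2*n*ν := by
      have h2 : F (-(n:ℤ)) + (F 0 - F (-(n:ℤ))) = F 0 := by ring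
      calc S = ‖F 0‖ := hF0.symm
        _ = ‖F (-(n:ℤ)) + (F 0 - F (-(n:ℤ)))‖ := by rw [h2]
        _ ≤ ‖F (-(n:ℤ))‖ + ‖F 0 - F (-(n:ℤ))‖ := norm_add_le _ _
        _ ≤ ‖F (-(n:ℤ))‖ + 2*n*ν := by
            have := hneg n
            rw [← norm_sub_rev] at this
            linarith
    linarith
  clear_value S x F
  -- choose K
  set K : ℕ := ⌊(x-1)/2⌋₊ with hKdef
  have hK1 : (K:ℝ) ≤ (x-1)/2 := Nat.floor_le (by linarith)
  have hK2 : (x-1)/2 < (K:ℝ) + 1 := Nat.lt_floor_add_one _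
  have h2K1 : 2*(K:ℝ)+1 ≤ x := by linarith
  clear_value K
  -- x ≤ m
  have hxm : x ≤ (m:ℝ) := by
    have hcard : (I.card : ℝ) ≤ (m:ℝ) := by
      have := Finset.card_le_univ I
      rw [ZMod.card] at this
      exact_mod_cast this
    have hSm : S ≤ (I.card : ℝ) * ν := by
      calc S ≤ ∑ n ∈ I, ‖φ n‖ := by rw [hS]; exact norm_sum_le _ _
        _ ≤ (I.card : ℝ) * ν := by
            have := Finset.sum_le_card_nsmul I (fun n => ‖φ n‖) ν (fun n _ => hbound n)
            simpa [nsmul_eq_mul] using this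
    rw [hxdef, div_le_iff₀ hν]
    calc S ≤ (I.card : ℝ) * ν := hSm
      _ ≤ (m:ℝ) * ν := by nlinarith
  have h2Km : 2*K + 1 ≤ m := by exact_mod_cast h2K1.trans hxm
  -- sum over distinct translates
  have hinjK : ∀ u ∈ Icc (-(K:ℤ)) K, ∀ v ∈ Icc (-(K:ℤ)) K, (u : ZMod m) = (v : ZMod m) → u = v := by
    intro u hu v hv h
    simp only [Finset.mem_Icc] at hu hv
    have h0 : ((u - v : ℤ) : ZMod m) = 0 := by push_cast; rw [h]; ring
    have hd : (m:ℤ) ∣ u - v := (ZMod.intCast_zmod_eq_zero_iff_dvd _ _).mp h0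
    have habs : |u - v| < (m:ℤ) := by rw [abs_lt]; omega
    have := Int.eq_zero_of_abs_lt_dvd hd habs
    omega
  have hmain : ∑ t ∈ Icc (-(K:ℤ)) K, (‖F t‖)^2
      ≤ ∑ a : ZMod m, (‖∑ n ∈ I, φ (n + a)‖)^2 := by
    calc ∑ t ∈ Icc (-(K:ℤ)) K, (‖F t‖)^2
        = ∑ a ∈ (Icc (-(K:ℤ)) K).image (Int.cast : ℤ → ZMod m),
            (‖∑ n ∈ I, φ (n + a)‖)^2 := by
          rw [Finset.sum_image hinjK]
          exact Finset.sum_congr rfl fun t _ => by rw [hFt t]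
      _ ≤ ∑ a : ZMod m, (‖∑ n ∈ I, φ (n + a)‖)^2 :=
          Finset.sum_le_sum_of_subset_of_nonneg (Finset.subset_univ _)
            (fun i _ _ => by positivity)
  -- split into negative and nonnegative parts
  have hsplit : ∑ t ∈ Icc (-(K:ℤ)) K, (‖F t‖)^2
      = ∑ t ∈ Icc (-(K:ℤ)) (-1), (‖F t‖)^2
        + ∑ t ∈ Icc (0:ℤ) K, (‖F t‖)^2 := by
    have hU : Icc (-(K:ℤ)) K = Icc (-(K:ℤ)) (-1) ∪ Icc (0:ℤ) K := by
      ext t; simp only [Finset.mem_Icc, Finset.mem_union]; omega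
    have hD : Disjoint (Icc (-(K:ℤ)) (-1)) (Icc (0:ℤ) K) := by
      rw [Finset.disjoint_left]
      intro t ht ht'
      simp only [Finset.mem_Icc] at ht ht'
      omega
    rw [hU, Finset.sum_union hD]
  have hposSum : ∑ t ∈ Icc (0:ℤ) K, (‖F t‖)^2
      = ∑ n ∈ range (K+1), (‖F (n:ℤ)‖)^2 := by
    have hI0 : Icc (0:ℤ) K = (range (K+1)).image (fun n : ℕ => (n:ℤ)) := by
      ext t
      simp only [Finset.mem_Icc, Finset.mem_image, Finset.mem_range]
      constructor
      · intro h; exact ⟨t.toNat, by omega, by omega⟩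
      · rintro ⟨n, hn, rfl⟩; omega
    rw [hI0, Finset.sum_image (by intro u _ v _ h; simp only at h; exact_mod_cast h)]
  have hnegSum : ∑ t ∈ Icc (-(K:ℤ)) (-1), (‖F t‖)^2
      = ∑ n ∈ range K, (‖F (-(n:ℤ)-1)‖)^2 := by
    have hI1 : Icc (-(K:ℤ)) (-1) = (range K).image (fun n : ℕ => -(n:ℤ)-1) := by
      ext t
      simp only [Finset.mem_Icc, Finset.mem_image, Finset.mem_range]
      constructor
      · intro h; exact ⟨(-t-1).toNat, by omega, by omega⟩
      · rintro ⟨n, hn, rfl⟩; omega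
    rw [hI1, Finset.sum_image (by intro u _ v _ h; simp only at h; omega)]
  -- bound each term from below
  have hb1 : ∑ n ∈ range (K+1), (S - 2*ν*n)^2 ≤ ∑ n ∈ range (K+1), (‖F (n:ℤ)‖)^2 := by
    refine Finset.sum_le_sum fun n hn => ?_
    have hn' : (n:ℝ) ≤ (K:ℝ) := by
      have := Nat.lt_succ_iff.mp (Finset.mem_range.mp hn); exact_mod_cast this
    have h0 : 0 ≤ S - 2*ν*n := by nlinarith
    exact pow_le_pow_left₀ h0 (hlowp n) 2
  have hb2 : ∑ n ∈ range K, (S - 2*ν*((n:ℝ)+1))^2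
      ≤ ∑ n ∈ range K, (‖F (-(n:ℤ)-1)‖)^2 := by
    refine Finset.sum_le_sum fun n hn => ?_
    have hn' : (n:ℝ) + 1 ≤ (K:ℝ) := by
      have := Finset.mem_range.mp hn
      have : n + 1 ≤ K := this
      exact_mod_cast this
    have h0 : 0 ≤ S - 2*ν*((n:ℝ)+1) := by nlinarith
    have hl := hlown (n+1)
    have he : (-(((n+1):ℕ):ℤ)) = -(n:ℤ)-1 := by push_cast; ring
    rw [he] at hl
    push_cast at hl
    exact pow_le_pow_left₀ h0 hl 2
  -- telescoping lower bound
  set r : ℝ := S - 2*ν*((K:ℝ)+1) with hrdef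
  clear_value r
  clear hbound _hattain hinj hIab hF hFt hstep hpos hneg hlowp hlown hinj' hS hKdef
  have htel : (S^3 - r^3)/(6*ν) ≤ ∑ n ∈ range (K+1), (S - 2*ν*n)^2 := by
    rw [hrdef]
    refine tel_bound S ν hν K fun n hn => ?_
    have hn' : (n:ℝ) ≤ (K:ℝ) := by exact_mod_cast hn
    have h2n : 2*(n:ℝ) ≤ x - 1 := by linarith
    have hm := mul_le_mul_of_nonneg_left h2n hν.le
    rw [hSx]
    linarith only [hm]
  -- shifted sum identity
  have hshiftsum : ∑ n ∈ range K, (S - 2*ν*((n:ℝ)+1))^2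
      = ∑ n ∈ range (K+1), (S - 2*ν*(n:ℝ))^2 - S^2 := shift_sum S ν K
  -- the endpoint cube is small
  have hr1 : r ≤ ν := by
    have h1 : x - 2*(K:ℝ) - 2 ≤ 1 := by linarith
    have h2 := mul_le_mul_of_nonneg_left h1 hν.le
    rw [hrdef, hSx]
    linarith only [h2]
  have hr2 : -ν ≤ r := by
    have h1 : -1 ≤ x - 2*(K:ℝ) - 2 := by linarith
    have h2 := mul_le_mul_of_nonneg_left h1 hν.le
    rw [hrdef, hSx]
    linarith only [h2]
  have hr3 : r^3 ≤ ν^3 := by nlinarith [sq_nonneg (r+ν), sq_nonneg (r-ν)]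
  -- final arithmetic
  have hεx : 3 ≤ ε * x := by
    rw [div_le_iff₀ hε] at hxε
    linarith [hxε]
  set D : ℝ := (S^3 - r^3)/(6*ν) with hD
  have hW : D*(6*ν) = S^3 - r^3 := by rw [hD]; exact div_mul_cancel₀ _ (by positivity)
  clear_value D
  have harith : (1/3 - ε) * S^3 / ν ≤ 2*D - S^2 := by
    have hP : (0:ℝ) ≤ x^2*ν^3 := by positivity
    have hq : ε*S^3 = (ε*x)*(x^2*ν^3) := by rw [hSx]; ring
    have hS2 : S^2*ν = x^2*ν^3 := by rw [hSx]; ring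
    have h1 : 3*(x^2*ν^3) ≤ (ε*x)*(x^2*ν^3) := mul_le_mul_of_nonneg_right hεx hP
    have hx2 : (1:ℝ) ≤ x^2 := by nlinarith
    have h2 : ν^3 ≤ x^2*ν^3 := by
      have := mul_le_mul_of_nonneg_right hx2 (pow_pos hν 3).le
      linarith only [this]
    rw [div_le_iff₀ hν]
    linarith only [hW, hq, hS2, h1, h2, hr3, hP]
  linarith only [hmain, hsplit, hposSum, hnegSum, hb1, hb2, htel, hshiftsum, harith]
end

section
/- Let p be prime, g a primitive root mod p, h ∈ 𝔽_p^×, and φ(n) = e(h·g^n/p) on ℤ/(p−1)ℤ. Then for every subset B ⊆ ℤ/(p−1)ℤ, ∑_{a ∈ ℤ/(p−1)ℤ} |∑_{n ∈ B} φ(n+a)|² = p·|B| − |B|². -/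
open Finset

/-- The additive character `t ↦ e(t/p) = exp(2πi·t/p)` on `ZMod p`. -/
noncomputable def eAdd (p : ℕ) (t : ZMod p) : ℂ :=
  Complex.exp (2 * Real.pi * Complex.I * (t.val : ℂ) / p)

section helpers

variable (p : ℕ) [Fact p.Prime]

lemma eAdd_eq_pow (t : ZMod p) :
    eAdd p t = Complex.exp (2 * Real.pi * Complex.I / p) ^ t.val := by
  rw [eAdd, ← Complex.exp_nat_mul]
  congr 1
  ring

lemma exp_pow_p : Complex.exp (2 * Real.pi * Complex.I / p) ^ p = 1 :=
  (Complex.isPrimitiveRoot_exp p (Fact.out : p.Prime).ne_zero).pow_eq_one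

lemma eAdd_add (a b : ZMod p) : eAdd p (a + b) = eAdd p a * eAdd p b := by
  haveI : NeZero p := ⟨(Fact.out : p.Prime).ne_zero⟩
  rw [eAdd_eq_pow, eAdd_eq_pow, eAdd_eq_pow, ← pow_add, ZMod.val_add,
    ← pow_eq_pow_mod _ (exp_pow_p p)]

lemma eAdd_zero : eAdd p 0 = 1 := by
  haveI : NeZero p := ⟨(Fact.out : p.Prime).ne_zero⟩
  simp [eAdd]

lemma abs_eAdd (t : ZMod p) : ‖eAdd p t‖ = 1 := by
  have : (2 * Real.pi * Complex.I * (t.val : ℂ) / p)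
      = ((2 * Real.pi * t.val / p : ℝ) : ℂ) * Complex.I := by
    push_cast
    ring
  rw [eAdd, this, Complex.norm_exp_ofReal_mul_I]

lemma conj_eAdd (t : ZMod p) : (starRingEnd ℂ) (eAdd p t) = eAdd p (-t) := by
  have h1 : eAdd p t * eAdd p (-t) = 1 := by
    rw [← eAdd_add, add_neg_cancel, eAdd_zero]
  rw [← Complex.inv_eq_conj (by simpa using abs_eAdd p t)]
  exact inv_eq_of_mul_eq_one_right h1

lemma sum_eAdd : ∑ x : ZMod p, eAdd p x = 0 := by
  haveI : NeZero p := ⟨(Fact.out : p.Prime).ne_zero⟩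
  have hgeo := (Complex.isPrimitiveRoot_exp p (Fact.out : p.Prime).ne_zero).geom_sum_eq_zero
    (Fact.out : p.Prime).one_lt
  rw [← hgeo]
  refine Finset.sum_nbij' (fun x => x.val) (fun i => (i : ZMod p)) ?_ ?_ ?_ ?_ ?_
  · intro a _
    exact Finset.mem_range.mpr (ZMod.val_lt a)
  · intro a _
    exact Finset.mem_univ _
  · intro a _
    simp [ZMod.natCast_val, ZMod.cast_id]
  · intro a ha
    exact ZMod.val_cast_of_lt (Finset.mem_range.mp ha)
  · intro a _
    exact eAdd_eq_pow p a

end helpers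

theorem sliding_sum_geometric_phase (p : ℕ) [Fact p.Prime] [NeZero (p - 1)]
    (g : (ZMod p)ˣ) (hg : orderOf g = p - 1) (h : ZMod p) (hh : h ≠ 0)
    (B : Finset (ZMod (p - 1))) :
    ∑ a : ZMod (p - 1),
        ‖∑ n ∈ B, eAdd p (h * (g : ZMod p) ^ ((n + a).val))‖ ^ 2 =
      (p : ℝ) * B.card - (B.card : ℝ) ^ 2 := by
  have hp : p.Prime := Fact.out
  haveI : NeZero p := ⟨hp.ne_zero⟩
  have hp1 : 1 < p := hp.one_lt
  -- g^(p-1) = 1 in ZMod p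
  have hg1 : (g : ZMod p) ^ (p - 1) = 1 := by
    have := pow_orderOf_eq_one g
    rw [hg] at this
    calc (g : ZMod p) ^ (p - 1) = ((g ^ (p - 1) : (ZMod p)ˣ) : ZMod p) :=
          (Units.val_pow_eq_pow_val g (p - 1)).symm
      _ = 1 := by rw [this]; rfl
  -- injectivity of b ↦ g^(b.val)
  have hginj : ∀ b b' : ZMod (p - 1),
      (g : ZMod p) ^ (b.val) = (g : ZMod p) ^ (b'.val) → b = b' := by
    intro b b' hbb
    have hu : g ^ b.val = g ^ b'.val := Units.ext (by
      simpa [Units.val_pow_eq_pow_val] using hbb)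
    rw [pow_inj_mod, hg, Nat.mod_eq_of_lt (ZMod.val_lt b),
      Nat.mod_eq_of_lt (ZMod.val_lt b')] at hu
    exact ZMod.val_injective _ hu
  -- the key character sum
  have key : ∀ d : ZMod (p - 1),
      (∑ b : ZMod (p - 1),
        eAdd p (h * (g : ZMod p) ^ ((b + d).val) - h * (g : ZMod p) ^ (b.val)))
      = if d = 0 then ((p : ℂ) - 1) else -1 := by
    intro d
    have hpow : ∀ b : ZMod (p - 1),
        (g : ZMod p) ^ ((b + d).val) = (g : ZMod p) ^ (b.val) * (g : ZMod p) ^ (d.val) := by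
      intro b
      rw [← pow_add, ZMod.val_add, ← pow_eq_pow_mod _ hg1]
    have harg : ∀ b : ZMod (p - 1),
        h * (g : ZMod p) ^ ((b + d).val) - h * (g : ZMod p) ^ (b.val)
          = (h * ((g : ZMod p) ^ (d.val) - 1)) * (g : ZMod p) ^ (b.val) := by
      intro b
      rw [hpow]
      ring
    by_cases hd : d = 0
    · subst hd
      simp only [harg, ZMod.val_zero, pow_zero, sub_self, mul_zero, zero_mul, eAdd_zero]
      rw [Finset.sum_const, Finset.card_univ, ZMod.card]
      simp [Nat.cast_sub hp1.le]
    · rw [if_neg hd]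
      have hc1 : (g : ZMod p) ^ (d.val) - 1 ≠ 0 := by
        intro hcon
        have hcc : (g : ZMod p) ^ (d.val) = 1 := by linear_combination hcon
        have hu : g ^ d.val = 1 := Units.ext (by
          simpa [Units.val_pow_eq_pow_val] using hcc)
        have hdvd : (p - 1) ∣ d.val := by
          have := orderOf_dvd_of_pow_eq_one hu
          rwa [hg] at this
        exact hd ((ZMod.val_eq_zero d).mp (Nat.eq_zero_of_dvd_of_lt hdvd (ZMod.val_lt d)))
      set t : ZMod p := h * ((g : ZMod p) ^ (d.val) - 1) with ht
      have htne : t ≠ 0 := mul_ne_zero hh hc1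
      have hchiinj : ∀ b b' : ZMod (p - 1),
          t * (g : ZMod p) ^ (b.val) = t * (g : ZMod p) ^ (b'.val) → b = b' := by
        intro b b' hbb
        exact hginj b b' (mul_left_cancel₀ htne hbb)
      have himg : Finset.image (fun b : ZMod (p - 1) => t * (g : ZMod p) ^ (b.val))
          Finset.univ = Finset.univ.erase (0 : ZMod p) := by
        apply Finset.eq_of_subset_of_card_le
        · intro x hx
          obtain ⟨b, _, rfl⟩ := Finset.mem_image.mp hx
          exact Finset.mem_erase.mpr ⟨mul_ne_zero htne (pow_ne_zero _ g.ne_zero),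
            Finset.mem_univ _⟩
        · rw [Finset.card_erase_of_mem (Finset.mem_univ _), Finset.card_univ, ZMod.card,
            Finset.card_image_of_injOn (fun b _ b' _ => hchiinj b b'), Finset.card_univ,
            ZMod.card]
      calc ∑ b : ZMod (p - 1),
            eAdd p (h * (g : ZMod p) ^ ((b + d).val) - h * (g : ZMod p) ^ (b.val))
          = ∑ b : ZMod (p - 1), eAdd p (t * (g : ZMod p) ^ (b.val)) := by
            exact Finset.sum_congr rfl fun b _ => by rw [harg]
        _ = ∑ x ∈ Finset.image (fun b : ZMod (p - 1) => t * (g : ZMod p) ^ (b.val))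
              Finset.univ, eAdd p x :=
            (Finset.sum_image (fun b _ b' _ => hchiinj b b')).symm
        _ = ∑ x ∈ Finset.univ.erase (0 : ZMod p), eAdd p x := by rw [himg]
        _ = (∑ x : ZMod p, eAdd p x) - eAdd p 0 :=
            Finset.sum_erase_eq_sub (Finset.mem_univ _)
        _ = -1 := by rw [sum_eAdd, eAdd_zero]; ring
  -- the complex version of the statement
  have main : (∑ a : ZMod (p - 1),
      ((‖∑ n ∈ B, eAdd p (h * (g : ZMod p) ^ ((n + a).val))‖) ^ 2 : ℂ))
      = (p : ℂ) * B.card - (B.card : ℂ) ^ 2 := by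
    have step1 : ∀ a : ZMod (p - 1),
        ((‖∑ n ∈ B, eAdd p (h * (g : ZMod p) ^ ((n + a).val))‖) ^ 2 : ℂ)
        = ∑ n ∈ B, ∑ m ∈ B,
            eAdd p (h * (g : ZMod p) ^ ((n + a).val) - h * (g : ZMod p) ^ ((m + a).val)) := by
      intro a
      set S := ∑ n ∈ B, eAdd p (h * (g : ZMod p) ^ ((n + a).val)) with hS
      have : ((‖S‖) ^ 2 : ℂ) = S * (starRingEnd ℂ) S := by
        rw [Complex.mul_conj, ← Complex.sq_norm]
        push_cast
        ring
      rw [this, hS, map_sum, Finset.sum_mul_sum]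
      refine Finset.sum_congr rfl fun n _ => Finset.sum_congr rfl fun m _ => ?_
      rw [conj_eAdd, ← eAdd_add, sub_eq_add_neg]
    calc ∑ a : ZMod (p - 1),
          ((‖∑ n ∈ B, eAdd p (h * (g : ZMod p) ^ ((n + a).val))‖) ^ 2 : ℂ)
        = ∑ a : ZMod (p - 1), ∑ n ∈ B, ∑ m ∈ B,
            eAdd p (h * (g : ZMod p) ^ ((n + a).val) - h * (g : ZMod p) ^ ((m + a).val)) :=
          Finset.sum_congr rfl fun a _ => step1 a
      _ = ∑ n ∈ B, ∑ m ∈ B, ∑ a : ZMod (p - 1),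
            eAdd p (h * (g : ZMod p) ^ ((n + a).val) - h * (g : ZMod p) ^ ((m + a).val)) := by
          rw [Finset.sum_comm]
          exact Finset.sum_congr rfl fun n _ => Finset.sum_comm
      _ = ∑ n ∈ B, ∑ m ∈ B, (if n - m = 0 then ((p : ℂ) - 1) else -1) := by
          refine Finset.sum_congr rfl fun n _ => Finset.sum_congr rfl fun m _ => ?_
          rw [← key (n - m)]
          refine Fintype.sum_bijective (fun a => m + a)
            (Equiv.addLeft m).bijective _ _ fun a => ?_
          congr 2 <;> ring_nf
      _ = ∑ n ∈ B, ∑ m ∈ B, ((if n = m then (p : ℂ) else 0) - 1) := by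
          refine Finset.sum_congr rfl fun n _ => Finset.sum_congr rfl fun m _ => ?_
          by_cases hnm : n = m
          · subst hnm; simp
          · rw [if_neg (fun hc => hnm (sub_eq_zero.mp hc)), if_neg hnm]; ring
      _ = ∑ n ∈ B, ((p : ℂ) - B.card) := by
          refine Finset.sum_congr rfl fun n hn => ?_
          rw [Finset.sum_sub_distrib, Finset.sum_ite_eq, if_pos hn, Finset.sum_const]
          simp
      _ = (p : ℂ) * B.card - (B.card : ℂ) ^ 2 := by
          rw [Finset.sum_const, nsmul_eq_mul]
          ring
  apply Complex.ofReal_injective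
  push_cast
  exact main
end

section
/- Let m ≥ 1, c ≥ 1, k ≥ 1, and let B ⊆ ℤ/mℤ be a proper 1-dimensional arithmetic progression {a₀ + n·a₁ : n ∈ I₁} with the representation unique and |B| ≥ √m. If φ : ℤ/mℤ → ℂ satisfies ‖φ‖_∞ ≤ c and |C(φ,a)| ≤ c√m for all a outside a set D of size ≤ c, then |∑_{x∈B} φ(x)| ≤ K·|B|·(√m/|B|)^{1/3} for a constant K depending only on c. -/
open Finset

private lemma sqrt_add_le'_s19 (a b : ℝ) (ha : 0 ≤ a) (hb : 0 ≤ b) :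
    Real.sqrt (a + b) ≤ Real.sqrt a + Real.sqrt b := by
  have h1 := Real.sqrt_nonneg a
  have h2 := Real.sqrt_nonneg b
  have ha' : Real.sqrt a ^ 2 = a := Real.sq_sqrt ha
  have hb' : Real.sqrt b ^ 2 = b := Real.sq_sqrt hb
  calc Real.sqrt (a + b) ≤ Real.sqrt ((Real.sqrt a + Real.sqrt b) ^ 2) := by
        apply Real.sqrt_le_sqrt; nlinarith
    _ = Real.sqrt a + Real.sqrt b := Real.sqrt_sq (by positivity)

set_option maxHeartbeats 1000000 in

private lemma aux_rpow (Nr mr : ℝ) (hm1 : 1 ≤ mr) (hN2r : 2 ≤ Nr) (hsN : Real.sqrt mr ≤ Nr) :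
    (1 ≤ (Nr * mr) ^ ((1:ℝ)/3)) ∧ (((Nr * mr) ^ ((1:ℝ)/3)) ^ 3 = Nr * mr) ∧
    ((Nr * mr) ^ ((1:ℝ)/3) ≤ Nr) ∧
    ((Nr * mr) ^ ((1:ℝ)/3) ≤ Nr ^ ((2:ℝ)/3) * mr ^ ((1:ℝ)/6)) ∧
    (Nr * Real.sqrt mr ≤ (Nr ^ ((2:ℝ)/3) * mr ^ ((1:ℝ)/6)) ^ 2) ∧
    (Nr * (Real.sqrt mr / Nr) ^ ((1:ℝ)/3) = Nr ^ ((2:ℝ)/3) * mr ^ ((1:ℝ)/6)) := by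
  have hm0 : (0:ℝ) < mr := lt_of_lt_of_le one_pos hm1
  have hN0 : (0:ℝ) < Nr := lt_of_lt_of_le two_pos hN2r
  set sm : ℝ := Real.sqrt mr with hsm
  have hsm0 : 0 < sm := Real.sqrt_pos.mpr hm0
  have hsm2 : sm ^ 2 = mr := Real.sq_sqrt hm0.le
  have hmN2 : mr ≤ Nr ^ 2 := by nlinarith
  have hNm1 : (1:ℝ) ≤ Nr * mr := by nlinarith
  have h1 : (1:ℝ) ≤ (Nr * mr) ^ ((1:ℝ)/3) := by
    calc (1:ℝ) = (1:ℝ) ^ ((1:ℝ)/3) := (Real.one_rpow _).symm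
      _ ≤ (Nr * mr) ^ ((1:ℝ)/3) :=
        Real.rpow_le_rpow zero_le_one hNm1 (by norm_num)
  have h2 : ((Nr * mr) ^ ((1:ℝ)/3)) ^ 3 = Nr * mr := by
    rw [← Real.rpow_natCast ((Nr * mr) ^ ((1:ℝ)/3)) 3,
      ← Real.rpow_mul (show (0:ℝ) ≤ Nr * mr by positivity)]
    norm_num
  have h3 : (Nr * mr) ^ ((1:ℝ)/3) ≤ Nr := by
    have hb : Nr * mr ≤ Nr ^ 3 := by nlinarith
    calc (Nr * mr) ^ ((1:ℝ)/3) ≤ (Nr ^ 3) ^ ((1:ℝ)/3) :=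
          Real.rpow_le_rpow (by positivity) hb (by norm_num)
      _ = Nr := by
          rw [← Real.rpow_natCast Nr 3, ← Real.rpow_mul hN0.le]
          norm_num
  have hR1 : mr ^ ((1:ℝ)/6) ≤ Nr ^ ((1:ℝ)/3) := by
    have e1 : mr ^ ((1:ℝ)/6) = sm ^ ((1:ℝ)/3) := by
      rw [hsm, Real.sqrt_eq_rpow, ← Real.rpow_mul hm0.le]; norm_num
    rw [e1]
    exact Real.rpow_le_rpow hsm0.le hsN (by norm_num)
  have h4 : (Nr * mr) ^ ((1:ℝ)/3) ≤ Nr ^ ((2:ℝ)/3) * mr ^ ((1:ℝ)/6) := by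
    calc (Nr * mr) ^ ((1:ℝ)/3) = Nr ^ ((1:ℝ)/3) * (mr ^ ((1:ℝ)/6) * mr ^ ((1:ℝ)/6)) := by
          rw [Real.mul_rpow hN0.le hm0.le, ← Real.rpow_add hm0]; norm_num
      _ ≤ Nr ^ ((1:ℝ)/3) * (Nr ^ ((1:ℝ)/3) * mr ^ ((1:ℝ)/6)) := by
          have := mul_le_mul_of_nonneg_right hR1 (Real.rpow_nonneg hm0.le ((1:ℝ)/6))
          exact mul_le_mul_of_nonneg_left this (Real.rpow_nonneg hN0.le _)
      _ = Nr ^ ((2:ℝ)/3) * mr ^ ((1:ℝ)/6) := by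
          rw [show (2:ℝ)/3 = 1/3 + 1/3 by norm_num, Real.rpow_add hN0]; ring
  have ht2 : (Nr ^ ((2:ℝ)/3) * mr ^ ((1:ℝ)/6)) ^ 2 = Nr ^ ((4:ℝ)/3) * mr ^ ((1:ℝ)/3) := by
    rw [mul_pow, ← Real.rpow_natCast (Nr ^ ((2:ℝ)/3)) 2,
      ← Real.rpow_natCast (mr ^ ((1:ℝ)/6)) 2, ← Real.rpow_mul hN0.le, ← Real.rpow_mul hm0.le]
    norm_num
  have h5 : Nr * sm ≤ (Nr ^ ((2:ℝ)/3) * mr ^ ((1:ℝ)/6)) ^ 2 := by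
    have e1 : sm = mr ^ ((1:ℝ)/6) * mr ^ ((1:ℝ)/3) := by
      rw [hsm, Real.sqrt_eq_rpow, ← Real.rpow_add hm0]; norm_num
    calc Nr * sm = (Nr * mr ^ ((1:ℝ)/6)) * mr ^ ((1:ℝ)/3) := by rw [e1]; ring
      _ ≤ (Nr * Nr ^ ((1:ℝ)/3)) * mr ^ ((1:ℝ)/3) := by
          have := mul_le_mul_of_nonneg_left hR1 hN0.le
          exact mul_le_mul_of_nonneg_right this (Real.rpow_nonneg hm0.le _)
      _ = (Nr ^ ((2:ℝ)/3) * mr ^ ((1:ℝ)/6)) ^ 2 := by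
          rw [ht2, show (4:ℝ)/3 = 1 + 1/3 by norm_num, Real.rpow_add hN0, Real.rpow_one]
  have h6 : Nr * (sm / Nr) ^ ((1:ℝ)/3) = Nr ^ ((2:ℝ)/3) * mr ^ ((1:ℝ)/6) := by
    have e1 : (sm / Nr) ^ ((1:ℝ)/3) = sm ^ ((1:ℝ)/3) / Nr ^ ((1:ℝ)/3) :=
      Real.div_rpow hsm0.le hN0.le _
    have e2 : sm ^ ((1:ℝ)/3) = mr ^ ((1:ℝ)/6) := by
      rw [hsm, Real.sqrt_eq_rpow, ← Real.rpow_mul hm0.le]; norm_num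
    have e3 : Nr / Nr ^ ((1:ℝ)/3) = Nr ^ ((2:ℝ)/3) := by
      rw [show (2:ℝ)/3 = 1 - 1/3 by norm_num, Real.rpow_sub hN0, Real.rpow_one]
    rw [e1, e2, ← e3]
    field_simp
  exact ⟨h1, h2, h3, h4, h5, h6⟩

private lemma aux_combine (c Hr A Q R sm Nr mr x t : ℝ)
    (hc : 1 ≤ c) (hA0 : 0 ≤ A) (hQ0 : 0 ≤ Q)
    (hsm1 : 1 ≤ sm) (hsm2 : sm ^ 2 = mr) (hN0 : 0 < Nr)
    (hx1 : 1 ≤ x) (hx3 : x ^ 3 = Nr * mr) (hxt : x ≤ t)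
    (hNs : Nr * sm ≤ t ^ 2)
    (hHx : x ≤ Hr) (hH2x : Hr ≤ 2 * x)
    (key1 : Hr * A ≤ Q + 2 * Hr ^ 2 * c)
    (key2 : Q ^ 2 ≤ Nr * R)
    (key3 : R ≤ Hr ^ 2 * (c * sm) + (c * Hr) * (c ^ 2 * mr)) :
    A ≤ 8 * c ^ 2 * t := by
  have hc0 : (0:ℝ) < c := lt_of_lt_of_le one_pos hc
  have hsm0 : (0:ℝ) < sm := lt_of_lt_of_le one_pos hsm1
  have hm0 : (0:ℝ) < mr := by nlinarith
  have hx0 : (0:ℝ) < x := lt_of_lt_of_le one_pos hx1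
  have hH0 : (0:ℝ) < Hr := lt_of_lt_of_le hx0 hHx
  have ht0 : (0:ℝ) < t := lt_of_lt_of_le hx0 hxt
  have hQle : Q ≤ Hr * (c * t) + Hr * (c ^ 2 * t) := by
    have h1 : Q ≤ Real.sqrt (Nr * (Hr ^ 2 * (c * sm)) + Nr * ((c * Hr) * (c ^ 2 * mr))) := by
      rw [show Q = Real.sqrt (Q ^ 2) from (Real.sqrt_sq hQ0).symm]
      apply Real.sqrt_le_sqrt
      linarith [mul_le_mul_of_nonneg_left key3 hN0.le, key2]
    have h2 : Real.sqrt (Nr * (Hr ^ 2 * (c * sm))) ≤ Hr * (c * t) := by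
      rw [show Hr * (c * t) = Real.sqrt ((Hr * (c * t)) ^ 2) from
        (Real.sqrt_sq (by positivity)).symm]
      apply Real.sqrt_le_sqrt
      have hns := mul_le_mul_of_nonneg_left hNs (show (0:ℝ) ≤ Hr ^ 2 * c by positivity)
      have hcc : c ≤ c ^ 2 := by nlinarith
      have h5 := mul_le_mul_of_nonneg_left hcc (show (0:ℝ) ≤ Hr ^ 2 * t ^ 2 by positivity)
      linarith [hns, h5]
    have h3 : Real.sqrt (Nr * ((c * Hr) * (c ^ 2 * mr))) ≤ Hr * (c ^ 2 * t) := by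
      rw [show Hr * (c ^ 2 * t) = Real.sqrt ((Hr * (c ^ 2 * t)) ^ 2) from
        (Real.sqrt_sq (by positivity)).symm]
      apply Real.sqrt_le_sqrt
      have hx2t2 : x ^ 2 ≤ t ^ 2 := by nlinarith
      have hNmr : Nr * mr ≤ Hr * t ^ 2 := by nlinarith
      have h5 := mul_le_mul_of_nonneg_left hNmr (show (0:ℝ) ≤ c ^ 3 * Hr by positivity)
      have h6 := mul_le_mul_of_nonneg_left hc (show (0:ℝ) ≤ c ^ 3 * Hr ^ 2 * t ^ 2 by positivity)
      linarith [h5, h6]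
    calc Q ≤ Real.sqrt (Nr * (Hr ^ 2 * (c * sm)) + Nr * ((c * Hr) * (c ^ 2 * mr))) := h1
      _ ≤ Real.sqrt (Nr * (Hr ^ 2 * (c * sm))) + Real.sqrt (Nr * ((c * Hr) * (c ^ 2 * mr))) :=
          sqrt_add_le'_s19 _ _ (by positivity) (by positivity)
      _ ≤ Hr * (c * t) + Hr * (c ^ 2 * t) := add_le_add h2 h3
  have h2 : 2 * Hr ^ 2 * c ≤ 4 * Hr * (c * t) := by
    have hh : Hr ≤ 2 * t := by linarith
    have := mul_le_mul_of_nonneg_left hh (show (0:ℝ) ≤ 2 * Hr * c by positivity)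
    linarith
  have h3 : Hr * A ≤ Hr * (8 * c ^ 2 * t) := by
    have hcc : c ≤ c ^ 2 := by nlinarith
    have h5 := mul_le_mul_of_nonneg_left hcc (show (0:ℝ) ≤ 5 * Hr * t by positivity)
    linarith [key1, hQle, h2, h5]
  exact le_of_mul_le_mul_left h3 hH0

/-- The `k = 1` case of Theorem 3: sums of a function satisfying Condition `H(c)`
over a proper `1`-dimensional arithmetic progression `B = {a₀ + n·a₁ : n ∈ I₁}`
of size at least `√m`. -/
theorem sliding_sum_gap_dim_one (c : ℝ) (hc : 1 ≤ c) :
    ∃ K : ℝ, 0 < K ∧ ∀ (m : ℕ) [NeZero m] (φ : ZMod m → ℂ)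
      (a₀ a₁ : ZMod m) (n₁ n₂ : ℤ) (B : Finset (ZMod m)),
      2 ≤ (Finset.Icc n₁ n₂).card →
      Set.InjOn (fun n : ℤ => a₀ + (n : ZMod m) * a₁) (Finset.Icc n₁ n₂ : Set ℤ) →
      B = (Finset.Icc n₁ n₂).image (fun n : ℤ => a₀ + (n : ZMod m) * a₁) →
      Real.sqrt m ≤ (B.card : ℝ) →
      (∀ x, ‖φ x‖ ≤ c) →
      ∀ D : Finset (ZMod m), (D.card : ℝ) ≤ c →
      (∀ a : ZMod m, a ∉ D → ‖corr φ a‖ ≤ c * Real.sqrt m) →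
      ‖∑ x ∈ B, φ x‖ ≤
        K * (B.card : ℝ) * (Real.sqrt m / (B.card : ℝ)) ^ ((1 : ℝ) / 3) := by
  have hc0 : (0 : ℝ) < c := lt_of_lt_of_le one_pos hc
  refine ⟨8 * c ^ 2, by positivity, ?_⟩
  intro m _ φ a₀ a₁ n₁ n₂ B hN2 hinj hB hsize hφ D hD hcorr
  classical
  set I : Finset ℤ := Finset.Icc n₁ n₂ with hI
  set f : ℤ → ℂ := fun n => φ (a₀ + (n : ZMod m) * a₁) with hf
  set N : ℕ := I.card with hNdef
  have hBcard : B.card = N := by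
    rw [hB]; exact Finset.card_image_of_injOn hinj
  have hsum : ∑ x ∈ B, φ x = ∑ n ∈ I, f n := by
    rw [hB]
    exact Finset.sum_image fun x hx y hy h =>
      hinj (Finset.mem_coe.mpr hx) (Finset.mem_coe.mpr hy) h
  -- real quantities
  set mr : ℝ := (m : ℝ) with hmr
  set Nr : ℝ := (N : ℝ) with hNr
  set sm : ℝ := Real.sqrt mr with hsm
  have hm1 : (1 : ℝ) ≤ mr := by
    have h := Nat.one_le_iff_ne_zero.mpr (NeZero.ne m)
    rw [hmr]; exact_mod_cast h
  have hm0 : (0 : ℝ) < mr := lt_of_lt_of_le one_pos hm1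
  have hsm1 : (1 : ℝ) ≤ sm := by
    rw [hsm, show (1:ℝ) = Real.sqrt 1 by rw [Real.sqrt_one]]
    exact Real.sqrt_le_sqrt hm1
  have hsm0 : (0 : ℝ) < sm := lt_of_lt_of_le one_pos hsm1
  have hsm2 : sm ^ 2 = mr := Real.sq_sqrt hm0.le
  have hN2r : (2 : ℝ) ≤ Nr := by rw [hNr]; exact_mod_cast hN2
  have hN0 : (0 : ℝ) < Nr := lt_of_lt_of_le two_pos hN2r
  have hsN : sm ≤ Nr := by
    calc sm ≤ ((B.card : ℕ) : ℝ) := hsize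
      _ = Nr := by rw [hBcard, hNr]
  have hmN2 : mr ≤ Nr ^ 2 := by nlinarith
  -- sliding length H
  obtain ⟨hx1, hx3, hxN, hxt', hNs', hteq⟩ := aux_rpow Nr mr hm1 hN2r hsN
  set x : ℝ := (Nr * mr) ^ ((1 : ℝ) / 3) with hxdef
  have hx0 : (0 : ℝ) < x := lt_of_lt_of_le one_pos hx1
  set H : ℕ := ⌈x⌉₊ with hHdef
  have hH1 : 1 ≤ H := Nat.one_le_ceil_iff.mpr hx0
  have hHx : x ≤ (H : ℝ) := Nat.le_ceil x
  have hHr1 : (1 : ℝ) ≤ (H : ℝ) := le_trans hx1 hHx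
  have hHr0 : (0 : ℝ) < (H : ℝ) := lt_of_lt_of_le one_pos hHr1
  have hH2x : (H : ℝ) ≤ 2 * x := by
    have := Nat.ceil_lt_add_one hx0.le
    rw [← hHdef] at this
    nlinarith
  have hHN : H ≤ N := by
    rw [hHdef]
    exact Nat.ceil_le.mpr (by rw [← hNr] at *; exact hxN)
  -- injectivity of n ↦ n•a₁ on [0, H)
  have hNZ : (N : ℤ) = n₂ + 1 - n₁ := by
    have h1 : N = (n₂ + 1 - n₁).toNat := Int.card_Icc n₁ n₂
    omega
  have hinj' : ∀ s t : ℕ, s < H → t < H →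
      (s : ZMod m) * a₁ = (t : ZMod m) * a₁ → s = t := by
    intro s t hs ht h
    have hsH : (s : ℤ) < (H : ℤ) := by exact_mod_cast hs
    have htH : (t : ℤ) < (H : ℤ) := by exact_mod_cast ht
    have hHN' : (H : ℤ) ≤ (N : ℤ) := by exact_mod_cast hHN
    have hmem1 : (n₁ + (s : ℤ)) ∈ (I : Set ℤ) := by
      rw [hI]; simp only [Finset.coe_Icc, Set.mem_Icc]; omega
    have hmem2 : (n₁ + (t : ℤ)) ∈ (I : Set ℤ) := by
      rw [hI]; simp only [Finset.coe_Icc, Set.mem_Icc]; omega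
    have heq : a₀ + ((n₁ + (s:ℤ) : ℤ) : ZMod m) * a₁ = a₀ + ((n₁ + (t:ℤ) : ℤ) : ZMod m) * a₁ := by
      push_cast
      linear_combination h
    have := hinj hmem1 hmem2 heq
    omega
  -- the sliding average function
  set G : ZMod m → ℂ := fun y => ∑ h ∈ Finset.range H, φ (y + (h : ZMod m) * a₁) with hG
  -- the main sum S
  set S : ℂ := ∑ n ∈ I, f n with hS
  -- Step A: shifting the interval changes the sum by at most 2Hc
  have habs_sum : ∀ u : Finset ℤ, ‖∑ n ∈ u, f n‖ ≤ u.card * c := by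
    intro u
    calc ‖∑ n ∈ u, f n‖ ≤ ∑ n ∈ u, ‖f n‖ :=
          norm_sum_le _ _
      _ ≤ ∑ n ∈ u, c := Finset.sum_le_sum fun n _ => hφ _
      _ = u.card * c := by rw [Finset.sum_const, nsmul_eq_mul]
  have htri : ∀ z w : ℂ, ‖z - w‖ ≤ ‖z‖ + ‖w‖ := by
    intro z w
    simpa [sub_eq_add_neg] using norm_add_le z (-w)
  have hshift : ∀ h : ℕ, h < H →
      ‖(∑ n ∈ I, f (n + (h : ℤ))) - S‖ ≤ 2 * (H : ℝ) * c := by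
    intro h hh
    have hre : ∑ n ∈ I, f (n + (h : ℤ)) = ∑ n ∈ Finset.Icc (n₁ + h) (n₂ + h), f n := by
      rw [hI, ← Finset.map_add_right_Icc, Finset.sum_map]
      rfl
    have hsub1 : Finset.Icc (n₁ + (h:ℤ)) (n₂ + h) \ I ⊆ Finset.Icc (n₂ + 1) (n₂ + h) := by
      intro y hy
      simp only [hI, Finset.mem_sdiff, Finset.mem_Icc, not_and, not_le] at hy ⊢
      omega
    have hsub2 : I \ Finset.Icc (n₁ + (h:ℤ)) (n₂ + h) ⊆ Finset.Icc n₁ (n₁ + h - 1) := by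
      intro y hy
      simp only [hI, Finset.mem_sdiff, Finset.mem_Icc, not_and, not_le] at hy ⊢
      omega
    have hcard1 : ((Finset.Icc (n₁ + (h:ℤ)) (n₂ + h) \ I).card : ℝ) ≤ (H : ℝ) := by
      have h1 := Finset.card_le_card hsub1
      have h2 : (Finset.Icc (n₂ + 1) (n₂ + (h:ℤ))).card = h := by
        rw [Int.card_Icc]; omega
      have : (Finset.Icc (n₁ + (h:ℤ)) (n₂ + h) \ I).card ≤ H := by omega
      exact_mod_cast this
    have hcard2 : ((I \ Finset.Icc (n₁ + (h:ℤ)) (n₂ + h)).card : ℝ) ≤ (H : ℝ) := by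
      have h1 := Finset.card_le_card hsub2
      have h2 : (Finset.Icc n₁ (n₁ + (h:ℤ) - 1)).card = h := by
        rw [Int.card_Icc]; omega
      have : (I \ Finset.Icc (n₁ + (h:ℤ)) (n₂ + h)).card ≤ H := by omega
      exact_mod_cast this
    rw [hre, hS, ← Finset.sum_sdiff_sub_sum_sdiff]
    calc ‖_ - _‖ ≤
        ‖∑ n ∈ Finset.Icc (n₁ + (h:ℤ)) (n₂ + h) \ I, f n‖ +
        ‖∑ n ∈ I \ Finset.Icc (n₁ + (h:ℤ)) (n₂ + h), f n‖ := by
          exact htri _ _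
      _ ≤ ((Finset.Icc (n₁ + (h:ℤ)) (n₂ + h) \ I).card : ℝ) * c +
          ((I \ Finset.Icc (n₁ + (h:ℤ)) (n₂ + h)).card : ℝ) * c := by
          gcongr <;> [exact habs_sum _; exact habs_sum _]
      _ ≤ (H : ℝ) * c + (H : ℝ) * c := by
          gcongr
      _ = 2 * (H : ℝ) * c := by ring
  -- Step key1
  have key1 : (H : ℝ) * ‖S‖ ≤
      ‖∑ n ∈ I, G (a₀ + (n : ZMod m) * a₁)‖ + 2 * (H : ℝ) ^ 2 * c := by
    have hGsum : ∑ h ∈ Finset.range H, ∑ n ∈ I, f (n + (h : ℤ)) =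
        ∑ n ∈ I, G (a₀ + (n : ZMod m) * a₁) := by
      rw [Finset.sum_comm]
      refine Finset.sum_congr rfl fun n _ => ?_
      rw [hG]
      refine Finset.sum_congr rfl fun h _ => ?_
      show φ (a₀ + ((n + (h:ℤ) : ℤ) : ZMod m) * a₁) = _
      congr 1
      push_cast
      ring
    have h1 : (H : ℝ) * ‖S‖ = ‖∑ _h ∈ Finset.range H, S‖ := by
      rw [Finset.sum_const, Finset.card_range, nsmul_eq_mul, norm_mul, Complex.norm_natCast]
    rw [h1]
    have h2 : ∑ _h ∈ Finset.range H, S =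
        (∑ h ∈ Finset.range H, ∑ n ∈ I, f (n + (h:ℤ))) -
        ∑ h ∈ Finset.range H, ((∑ n ∈ I, f (n + (h:ℤ))) - S) := by
      rw [Finset.sum_sub_distrib]; ring
    rw [h2, ← hGsum]
    calc ‖_ - _‖ ≤
        ‖∑ h ∈ Finset.range H, ∑ n ∈ I, f (n + (h:ℤ))‖ +
        ‖∑ h ∈ Finset.range H, ((∑ n ∈ I, f (n + (h:ℤ))) - S)‖ :=
          htri _ _
      _ ≤ ‖∑ h ∈ Finset.range H, ∑ n ∈ I, f (n + (h:ℤ))‖ +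
          ∑ h ∈ Finset.range H, (2 * (H:ℝ) * c) := by
          gcongr
          calc ‖∑ h ∈ Finset.range H, ((∑ n ∈ I, f (n + (h:ℤ))) - S)‖
              ≤ ∑ h ∈ Finset.range H, ‖(∑ n ∈ I, f (n + (h:ℤ))) - S‖ :=
                norm_sum_le _ _
            _ ≤ ∑ h ∈ Finset.range H, (2 * (H:ℝ) * c) :=
                Finset.sum_le_sum fun h hh => hshift h (Finset.mem_range.mp hh)
      _ = ‖∑ h ∈ Finset.range H, ∑ n ∈ I, f (n + (h:ℤ))‖ + 2 * (H:ℝ)^2 * c := by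
          rw [Finset.sum_const, Finset.card_range, nsmul_eq_mul]; ring
  -- Step key2 : Cauchy-Schwarz
  have key2 : ‖∑ n ∈ I, G (a₀ + (n : ZMod m) * a₁)‖ ^ 2 ≤
      Nr * ∑ y : ZMod m, ‖G y‖ ^ 2 := by
    have h1 : ‖∑ n ∈ I, G (a₀ + (n : ZMod m) * a₁)‖ ≤
        ∑ n ∈ I, ‖G (a₀ + (n : ZMod m) * a₁)‖ := norm_sum_le _ _
    have h2 : (∑ n ∈ I, ‖G (a₀ + (n : ZMod m) * a₁)‖) ^ 2 ≤
        Nr * ∑ n ∈ I, ‖G (a₀ + (n : ZMod m) * a₁)‖ ^ 2 := by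
      have := sq_sum_le_card_mul_sum_sq (s := I)
        (f := fun n => ‖G (a₀ + (n : ZMod m) * a₁)‖)
      exact_mod_cast this
    have h3 : ∑ n ∈ I, ‖G (a₀ + (n : ZMod m) * a₁)‖ ^ 2 =
        ∑ y ∈ B, ‖G y‖ ^ 2 := by
      rw [hB]
      exact (Finset.sum_image (f := fun y => ‖G y‖ ^ 2)
        fun p hp q hq hpq =>
        hinj (Finset.mem_coe.mpr hp) (Finset.mem_coe.mpr hq) hpq).symm
    have h4 : ∑ y ∈ B, ‖G y‖ ^ 2 ≤ ∑ y : ZMod m, ‖G y‖ ^ 2 :=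
      Finset.sum_le_sum_of_subset_of_nonneg (Finset.subset_univ B)
        (fun y _ _ => by positivity)
    calc ‖∑ n ∈ I, G (a₀ + (n : ZMod m) * a₁)‖ ^ 2 ≤
        (∑ n ∈ I, ‖G (a₀ + (n : ZMod m) * a₁)‖) ^ 2 := by
          exact pow_le_pow_left₀ (norm_nonneg _) h1 2
      _ ≤ Nr * ∑ n ∈ I, ‖G (a₀ + (n : ZMod m) * a₁)‖ ^ 2 := h2
      _ ≤ Nr * ∑ y : ZMod m, ‖G y‖ ^ 2 := by
          rw [h3]; exact mul_le_mul_of_nonneg_left h4 hN0.le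
  -- Step key3 : autocorrelation bound
  set P : Finset (ℕ × ℕ) := Finset.range H ×ˢ Finset.range H with hP
  set dm : ℕ × ℕ → ZMod m := fun p => ((p.2 : ZMod m) - (p.1 : ZMod m)) * a₁ with hdm
  have hcorr_id : ((∑ y : ZMod m, ‖G y‖ ^ 2 : ℝ) : ℂ) =
      ∑ p ∈ P, corr φ (dm p) := by
    push_cast
    calc (∑ y : ZMod m, (‖G y‖ : ℂ) ^ 2) =
        ∑ y : ZMod m, G y * (starRingEnd ℂ) (G y) := by
          refine Finset.sum_congr rfl fun y _ => ?_
          rw [← Complex.ofReal_pow, Complex.sq_norm, Complex.mul_conj]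
      _ = ∑ p ∈ P, ∑ y : ZMod m,
            φ (y + (p.1 : ZMod m) * a₁) * (starRingEnd ℂ) (φ (y + (p.2 : ZMod m) * a₁)) := by
          rw [hP]
          simp_rw [hG, map_sum, Finset.sum_mul_sum, Finset.sum_product]
          rw [Finset.sum_comm]
          refine Finset.sum_congr rfl fun h _ => ?_
          rw [Finset.sum_comm]
      _ = ∑ p ∈ P, corr φ (dm p) := by
          refine Finset.sum_congr rfl fun p _ => ?_
          rw [corr, hdm]
          have := Equiv.sum_comp (Equiv.addRight ((p.1 : ZMod m) * a₁))
            (fun y => φ y * (starRingEnd ℂ)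
              (φ (y + ((p.2 : ZMod m) - (p.1 : ZMod m)) * a₁)))
          simp only [Equiv.coe_addRight] at this
          rw [← this]
          refine Finset.sum_congr rfl fun y _ => ?_
          congr 2
          ring
  have hcorr_triv : ∀ a : ZMod m, ‖corr φ a‖ ≤ c ^ 2 * mr := by
    intro a
    rw [corr]
    calc ‖∑ y : ZMod m, φ y * (starRingEnd ℂ) (φ (y + a))‖ ≤
        ∑ y : ZMod m, ‖φ y * (starRingEnd ℂ) (φ (y + a))‖ :=
          norm_sum_le _ _
      _ ≤ ∑ _y : ZMod m, c * c := by
          refine Finset.sum_le_sum fun y _ => ?_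
          rw [norm_mul, Complex.norm_conj]
          exact mul_le_mul (hφ _) (hφ _) (norm_nonneg _) hc0.le
      _ = c ^ 2 * mr := by
          rw [Finset.sum_const, Finset.card_univ, ZMod.card, nsmul_eq_mul]
          rw [hmr]; ring
  have hbadcard : (((P.filter fun p => dm p ∈ D).card : ℝ)) ≤ c * (H : ℝ) := by
    have h1 : (P.filter fun p => dm p ∈ D).card =
        ∑ a ∈ D, ((P.filter fun p => dm p ∈ D).filter fun p => dm p = a).card :=
      Finset.card_eq_sum_card_fiberwise fun p hp => (Finset.mem_filter.mp hp).2
    have h2 : ∀ a ∈ D, ((P.filter fun p => dm p ∈ D).filter fun p => dm p = a).card ≤ H := by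
      intro a _
      have := Finset.card_le_card_of_injOn (f := Prod.fst)
        (s := (P.filter fun p => dm p ∈ D).filter fun p => dm p = a)
        (t := Finset.range H) ?_ ?_
      · simpa using this
      · intro p hp
        simp only [Finset.mem_coe, Finset.mem_filter, hP, Finset.mem_product] at hp
        exact hp.1.1.1
      · intro p hp q hq hfst
        simp only [Finset.mem_coe, Finset.mem_filter, hP, Finset.mem_product,
          Finset.mem_range] at hp hq
        have hdp : dm p = dm q := hp.2.trans hq.2.symm
        rw [hdm] at hdp
        have hcast : (p.1 : ZMod m) * a₁ = (q.1 : ZMod m) * a₁ := by rw [hfst]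
        have h22 : (p.2 : ZMod m) * a₁ = (q.2 : ZMod m) * a₁ := by
          linear_combination hdp + hcast
        have := hinj' p.2 q.2 hp.1.1.2 hq.1.1.2 h22
        exact Prod.ext hfst this
    have h3 : (P.filter fun p => dm p ∈ D).card ≤ D.card * H := by
      rw [h1]
      calc ∑ a ∈ D, ((P.filter fun p => dm p ∈ D).filter fun p => dm p = a).card ≤
          ∑ _a ∈ D, H := Finset.sum_le_sum h2
        _ = D.card * H := by rw [Finset.sum_const, smul_eq_mul]
    calc (((P.filter fun p => dm p ∈ D).card : ℝ)) ≤ ((D.card * H : ℕ) : ℝ) := by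
          exact_mod_cast h3
      _ = (D.card : ℝ) * (H : ℝ) := by push_cast; ring
      _ ≤ c * (H : ℝ) := mul_le_mul_of_nonneg_right hD (Nat.cast_nonneg H)
  have key3 : ∑ y : ZMod m, ‖G y‖ ^ 2 ≤
      (H : ℝ) ^ 2 * (c * sm) + (c * (H : ℝ)) * (c ^ 2 * mr) := by
    have h0 : (0 : ℝ) ≤ ∑ y : ZMod m, ‖G y‖ ^ 2 :=
      Finset.sum_nonneg fun y _ => by positivity
    have h1 : ∑ y : ZMod m, ‖G y‖ ^ 2 =
        ‖∑ p ∈ P, corr φ (dm p)‖ := by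
      rw [← hcorr_id, Complex.norm_real, Real.norm_eq_abs, abs_of_nonneg h0]
    rw [h1]
    calc ‖∑ p ∈ P, corr φ (dm p)‖ ≤
        ∑ p ∈ P, ‖corr φ (dm p)‖ := norm_sum_le _ _
      _ = ∑ p ∈ P.filter (fun p => dm p ∈ D), ‖corr φ (dm p)‖ +
          ∑ p ∈ P.filter (fun p => ¬ dm p ∈ D), ‖corr φ (dm p)‖ :=
          (Finset.sum_filter_add_sum_filter_not P _ _).symm
      _ ≤ (((P.filter fun p => dm p ∈ D).card : ℝ)) * (c ^ 2 * mr) +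
          (((P.filter fun p => ¬ dm p ∈ D).card : ℝ)) * (c * sm) := by
          gcongr ?_ + ?_
          · calc ∑ p ∈ P.filter (fun p => dm p ∈ D), ‖corr φ (dm p)‖ ≤
                ∑ _p ∈ P.filter (fun p => dm p ∈ D), (c ^ 2 * mr) :=
                  Finset.sum_le_sum fun p _ => hcorr_triv _
              _ = _ := by rw [Finset.sum_const, nsmul_eq_mul]
          · calc ∑ p ∈ P.filter (fun p => ¬ dm p ∈ D), ‖corr φ (dm p)‖ ≤
                ∑ _p ∈ P.filter (fun p => ¬ dm p ∈ D), (c * sm) :=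
                  Finset.sum_le_sum fun p hp =>
                    hcorr ((dm p)) (Finset.mem_filter.mp hp).2
              _ = _ := by rw [Finset.sum_const, nsmul_eq_mul]
      _ ≤ (c * (H : ℝ)) * (c ^ 2 * mr) + (H : ℝ) ^ 2 * (c * sm) := by
          gcongr ?_ + ?_
          · exact mul_le_mul_of_nonneg_right hbadcard (by positivity)
          · apply mul_le_mul_of_nonneg_right _ (by positivity)
            calc (((P.filter fun p => ¬ dm p ∈ D).card : ℝ)) ≤ ((P.card : ℕ) : ℝ) := by
                  exact_mod_cast Finset.card_le_card (Finset.filter_subset _ _)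
              _ = (H : ℝ) ^ 2 := by
                  rw [hP, Finset.card_product, Finset.card_range]; push_cast; ring
      _ = (H : ℝ) ^ 2 * (c * sm) + (c * (H : ℝ)) * (c ^ 2 * mr) := by ring
  -- rpow arithmetic
  set t : ℝ := Nr ^ ((2:ℝ)/3) * mr ^ ((1:ℝ)/6) with htdef
  -- assemble
  set A : ℝ := ‖S‖ with hA
  have hA0 : 0 ≤ A := norm_nonneg _
  set Q : ℝ := ‖∑ n ∈ I, G (a₀ + (n : ZMod m) * a₁)‖ with hQ
  have hQ0 : 0 ≤ Q := norm_nonneg _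
  have hAt : A ≤ 8 * c ^ 2 * t :=
    aux_combine c (H : ℝ) A Q (∑ y : ZMod m, ‖G y‖ ^ 2) sm Nr mr x t
      hc hA0 hQ0 hsm1 hsm2 hN0 hx1 hx3 hxt' hNs' hHx hH2x key1 key2 key3
  have hBr : ((B.card : ℕ) : ℝ) = Nr := by rw [hBcard, hNr]
  calc ‖∑ y ∈ B, φ y‖ = A := by rw [hsum, hA, hS]
    _ ≤ 8 * c ^ 2 * t := hAt
    _ = 8 * c ^ 2 * (Nr * (sm / Nr) ^ ((1:ℝ)/3)) := by rw [hteq, htdef]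
    _ = 8 * c ^ 2 * (B.card : ℝ) * (Real.sqrt m / (B.card : ℝ)) ^ ((1:ℝ)/3) := by
        rw [hBr]; ring
end
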